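/- arXiv:2508.01187 — 5 statements merged into one kernel-verified Lean document; each statement's English description precedes it below -/
import Mathlib

section
/- Let p be a prime and let n ≥ d ≥ 3 be integers. The number of d-tensors T : (𝔽_p^n)^d → 𝔽_p of partition rank at most r is at most p^{2·n^{d-1}·r}. -/
/-- A `d`-tensor on `𝔽_p^n`: a multilinear form `T : (𝔽_p^n)^d → 𝔽_p`. -/
abbrev Tensor (p n d : ℕ) :=
  MultilinearMap (ZMod p) (fun _ : Fin d => (Fin n → ZMod p)) (ZMod p)

/-- `T` has partition rank `1` if there exist a partition of `{1,…,d}` into two nonempty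
sets and multilinear forms `T₁`, `T₂` on the respective sets of variables with
`T(x_1,…,x_d) = T₁(x_{i_1},…,x_{i_a})·T₂(x_{j_1},…,x_{j_b})`. -/
def PRankOne {p n d : ℕ} (T : Tensor p n d) : Prop :=
  ∃ A : Finset (Fin d), A.Nonempty ∧ A ≠ Finset.univ ∧
    ∃ (T₁ : MultilinearMap (ZMod p) (fun _ : {i // i ∈ A} => (Fin n → ZMod p)) (ZMod p))
      (T₂ : MultilinearMap (ZMod p) (fun _ : {i // i ∉ A} => (Fin n → ZMod p)) (ZMod p)),
      ∀ x, T x = T₁ (fun i => x i.1) * T₂ (fun i => x i.1)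

/-- The partition rank of `T`: the smallest `r` such that `T` is a sum of `r` tensors each
of partition rank `1` (and `prank 0 = 0`). -/
noncomputable def prank {p n d : ℕ} (T : Tensor p n d) : ℕ :=
  sInf {r | ∃ f : Fin r → Tensor p n d, (∀ i, PRankOne (f i)) ∧ T = ∑ i, f i}

section Aux
variable {p n d : ℕ}

open MultilinearMap

noncomputable def prodT (A : Finset (Fin d))
    (T₁ : MultilinearMap (ZMod p) (fun _ : {i // i ∈ A} => (Fin n → ZMod p)) (ZMod p))
    (T₂ : MultilinearMap (ZMod p) (fun _ : {i // i ∉ A} => (Fin n → ZMod p)) (ZMod p)) :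
    Tensor p n d :=
  ((LinearMap.mul' (ZMod p) (ZMod p)).compMultilinearMap (T₁.domCoprod T₂)).domDomCongr
    (Equiv.sumCompl (· ∈ A))

lemma prodT_apply (A : Finset (Fin d))
    (T₁ : MultilinearMap (ZMod p) (fun _ : {i // i ∈ A} => (Fin n → ZMod p)) (ZMod p))
    (T₂ : MultilinearMap (ZMod p) (fun _ : {i // i ∉ A} => (Fin n → ZMod p)) (ZMod p))
    (x : Fin d → (Fin n → ZMod p)) :
    prodT A T₁ T₂ x = T₁ (fun i => x i.1) * T₂ (fun i => x i.1) := by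
  simp [prodT]

/-- Evaluation of a multilinear form on tuples of standard basis vectors is injective. -/
lemma ev_injective {ι : Type*} [Finite ι] :
    Function.Injective
      (fun (T : MultilinearMap (ZMod p) (fun _ : ι => (Fin n → ZMod p)) (ZMod p))
        (f : ι → Fin n) => T (fun i => Pi.single (f i) (1 : ZMod p))) := by
  classical
  intro T₁ T₂ h
  refine Module.Basis.ext_multilinear (fun _ => Pi.basisFun (ZMod p) (Fin n)) fun v => ?_
  have := congrFun h v
  simpa [Pi.basisFun_apply] using this

instance ml_finite {ι : Type*} [NeZero p] [Finite ι] :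
    Finite (MultilinearMap (ZMod p) (fun _ : ι => (Fin n → ZMod p)) (ZMod p)) :=
  Finite.of_injective _ (ev_injective (p := p) (n := n))

lemma ml_card {ι : Type*} [NeZero p] [Fintype ι] :
    Nat.card (MultilinearMap (ZMod p) (fun _ : ι => (Fin n → ZMod p)) (ZMod p))
      ≤ p ^ n ^ Fintype.card ι := by
  classical
  calc Nat.card (MultilinearMap (ZMod p) (fun _ : ι => (Fin n → ZMod p)) (ZMod p))
      ≤ Nat.card ((ι → Fin n) → ZMod p) :=
        Nat.card_le_card_of_injective _ (ev_injective (p := p) (n := n))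
    _ = p ^ n ^ Fintype.card ι := by
        rw [Nat.card_fun, Nat.card_fun]
        simp [Nat.card_eq_fintype_card, ZMod.card]

/-- Elementary rank-one tensors. -/
noncomputable def ET (c : ZMod p) (f : Fin d → Fin n) : Tensor p n d :=
  (MultilinearMap.mkPiRing (ZMod p) (Fin d) c).compLinearMap fun i => LinearMap.proj (f i)

lemma ET_apply (c : ZMod p) (f : Fin d → Fin n) (x : Fin d → (Fin n → ZMod p)) :
    ET c f x = (∏ i, x i (f i)) * c := by
  simp [ET, smul_eq_mul]

lemma prankOne_ET (hd : 2 ≤ d) (c : ZMod p) (f : Fin d → Fin n) :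
    PRankOne (ET c f) := by
  set A : Finset (Fin d) := {⟨0, by omega⟩} with hA
  have h1 : A.Nonempty := Finset.singleton_nonempty _
  have h2 : A ≠ Finset.univ := by
    intro h
    have : (⟨1, by omega⟩ : Fin d) ∈ A := h ▸ Finset.mem_univ _
    rw [hA, Finset.mem_singleton] at this
    exact absurd (congrArg Fin.val this) (by simp)
  refine ⟨A, h1, h2,
    (MultilinearMap.mkPiRing (ZMod p) {i // i ∈ A} c).compLinearMap
      (fun i => LinearMap.proj (f i.1)),
    (MultilinearMap.mkPiRing (ZMod p) {i // i ∉ A} (1 : ZMod p)).compLinearMap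
      (fun i => LinearMap.proj (f i.1)), fun x => ?_⟩
  have e1 : (∏ i : {i // i ∈ A}, x i.1 (f i.1)) = ∏ i ∈ A, x i (f i) :=
    (Finset.prod_subtype A (fun i => Iff.rfl) (fun i => x i (f i))).symm
  have e2 : (∏ i : {i // i ∉ A}, x i.1 (f i.1)) = ∏ i ∈ Aᶜ, x i (f i) :=
    (Finset.prod_subtype Aᶜ (fun i => Finset.mem_compl) (fun i => x i (f i))).symm
  have hsplit : ((∏ i : {i // i ∈ A}, x i.1 (f i.1)) * ∏ i : {i // i ∉ A}, x i.1 (f i.1))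
      = ∏ i, x i (f i) := by
    rw [e1, e2]
    exact Finset.prod_mul_prod_compl A _
  rw [ET_apply]
  simp only [MultilinearMap.compLinearMap_apply, MultilinearMap.mkPiRing_apply,
    LinearMap.proj_apply, smul_eq_mul]
  rw [← hsplit]
  ring

lemma prankOne_zero (hd : 2 ≤ d) (hn : 1 ≤ n) : PRankOne (0 : Tensor p n d) := by
  have h : (0 : Tensor p n d) = ET 0 (fun _ => ⟨0, by omega⟩) := by
    ext x
    simp [ET_apply]
  rw [h]
  exact prankOne_ET hd _ _

lemma exists_decomp (hd : 2 ≤ d) (T : Tensor p n d) :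
    ∃ m, ∃ f : Fin m → Tensor p n d, (∀ i, PRankOne (f i)) ∧ T = ∑ i, f i := by
  classical
  set c : (Fin d → Fin n) → ZMod p := fun g => T fun i => Pi.single (g i) 1 with hc
  have hT : T = ∑ g : Fin d → Fin n, ET (c g) g := by
    refine Module.Basis.ext_multilinear (fun _ => Pi.basisFun (ZMod p) (Fin n)) fun v => ?_
    rw [MultilinearMap.sum_apply]
    simp only [ET_apply, Pi.basisFun_apply]
    rw [Finset.sum_eq_single v]
    · simp [hc]
    · intro g _ hg
      obtain ⟨i, hi⟩ := Function.ne_iff.mp hg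
      have hz : (Pi.single (v i) 1 : Fin n → ZMod p) (g i) = 0 := by
        rw [Pi.single_apply, if_neg hi]
      rw [Finset.prod_eq_zero (Finset.mem_univ i) hz, zero_mul]
    · simp
  set e := Fintype.equivFin (Fin d → Fin n) with he
  refine ⟨_, fun j => ET (c (e.symm j)) (e.symm j), fun j => prankOne_ET hd _ _, ?_⟩
  rw [hT]
  exact Fintype.sum_equiv e _ _ (fun g => by simp)

lemma prank_decomp (hd : 2 ≤ d) (T : Tensor p n d) :
    ∃ f : Fin (prank T) → Tensor p n d, (∀ i, PRankOne (f i)) ∧ T = ∑ i, f i := by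
  have hne : {r | ∃ f : Fin r → Tensor p n d, (∀ i, PRankOne (f i)) ∧ T = ∑ i, f i}.Nonempty := by
    obtain ⟨m, f, h1, h2⟩ := exists_decomp hd T
    exact ⟨m, f, h1, h2⟩
  exact Nat.sInf_mem hne

lemma exp_bound {n a b : ℕ} (hn : 1 ≤ n) (ha : 1 ≤ a) (hb : 1 ≤ b) :
    n ^ a + n ^ b ≤ n ^ (a + b - 1) + n := by
  have h1 : n ≤ n ^ a := by
    calc n = n ^ 1 := (pow_one n).symm
      _ ≤ n ^ a := Nat.pow_le_pow_right hn ha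
  have h2 : (1 : ℕ) ≤ n ^ (b - 1) := Nat.one_le_pow _ _ (by omega)
  have key := mul_add_mul_le_mul_add_mul h1 h2
  have hb' : n * n ^ (b - 1) = n ^ b := by
    rw [← pow_succ']
    congr 1
    omega
  have hab : n ^ a * n ^ (b - 1) = n ^ (a + b - 1) := by
    rw [← pow_add]
    congr 1
    omega
  rw [hb', hab] at key
  omega

lemma card_sigma_le {ι : Type*} [Finite ι] (f : ι → Type*) [∀ i, Finite (f i)] {B : ℕ}
    (h : ∀ i, Nat.card (f i) ≤ B) : Nat.card (Σ i, f i) ≤ Nat.card ι * B := by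
  classical
  cases nonempty_fintype ι
  letI : ∀ i, Fintype (f i) := fun i => Fintype.ofFinite _
  rw [Nat.card_eq_fintype_card, Fintype.card_sigma, Nat.card_eq_fintype_card]
  calc ∑ i, Fintype.card (f i) ≤ ∑ _i : ι, B :=
        Finset.sum_le_sum fun i _ => by rw [← Nat.card_eq_fintype_card]; exact h i
    _ = Fintype.card ι * B := by simp [mul_comm]

end Aux

/-- Let `p` be a prime and `n ≥ d ≥ 3`. The number of `d`-tensors on `𝔽_p^n` of partition
rank at most `r` is at most `p^(2·n^(d-1)·r)`. -/
theorem stmt2 (p n d r : ℕ) [hp : Fact p.Prime] (hd : 3 ≤ d) (hnd : d ≤ n) :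
    Nat.card {T : Tensor p n d // prank T ≤ r} ≤ p ^ (2 * n ^ (d - 1) * r) := by
  classical
  have hp2 : 2 ≤ p := hp.out.two_le
  haveI : NeZero p := ⟨by omega⟩
  have hn3 : 3 ≤ n := le_trans hd hnd
  -- the parameter space
  let Idx := {A : Finset (Fin d) // A.Nonempty ∧ A ≠ Finset.univ}
  let D := (A : Idx) ×
    (MultilinearMap (ZMod p) (fun _ : {i // i ∈ A.1} => (Fin n → ZMod p)) (ZMod p) ×
     MultilinearMap (ZMod p) (fun _ : {i // i ∉ A.1} => (Fin n → ZMod p)) (ZMod p))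
  let Ψ : (Fin r → D) → Tensor p n d := fun g => ∑ i, prodT (g i).1.1 (g i).2.1 (g i).2.2
  -- every tensor of partition rank at most `r` is in the range of `Ψ`
  have key : ∀ T : Tensor p n d, prank T ≤ r → ∃ g, Ψ g = T := by
    intro T hT
    obtain ⟨f, hf1, hf2⟩ := prank_decomp (by omega) T
    let F : ℕ → Tensor p n d := fun k => if h : k < prank T then f ⟨k, h⟩ else 0
    have hF : ∀ k, PRankOne (F k) := by
      intro k
      by_cases h : k < prank T
      · simpa [F, h] using hf1 ⟨k, h⟩
      · simpa [F, h] using prankOne_zero (p := p) (by omega) (by omega)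
    have hsum : T = ∑ i : Fin r, F i.1 := by
      rw [hf2]
      have h1 : ∑ i : Fin (prank T), f i = ∑ i : Fin (prank T), F i.1 :=
        Finset.sum_congr rfl fun i _ => by simp [F, i.isLt]
      rw [h1, Fin.sum_univ_eq_sum_range (fun k => F k) (prank T),
        Fin.sum_univ_eq_sum_range (fun k => F k) r]
      refine Finset.sum_subset (Finset.range_subset_range.2 hT) fun k _ hk => ?_
      have hnk : ¬ k < prank T := by simpa using hk
      simp [F, hnk]
    have hrep : ∀ i : Fin r, ∃ dd : D, prodT dd.1.1 dd.2.1 dd.2.2 = F i.1 := by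
      intro i
      obtain ⟨A, h1, h2, T₁, T₂, hval⟩ := hF i.1
      refine ⟨⟨⟨A, h1, h2⟩, T₁, T₂⟩, ?_⟩
      refine MultilinearMap.ext fun x => ?_
      rw [prodT_apply]
      exact (hval x).symm
    choose g hg using hrep
    refine ⟨g, ?_⟩
    show ∑ i, prodT (g i).1.1 (g i).2.1 (g i).2.2 = T
    rw [hsum]
    exact Finset.sum_congr rfl fun i _ => hg i
  -- injection from the set of tensors of rank at most `r` to `Fin r → D`
  let θ : {T : Tensor p n d // prank T ≤ r} → (Fin r → D) := fun T => (key T.1 T.2).choose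
  have θinj : Function.Injective θ := by
    intro T₁ T₂ h
    apply Subtype.ext
    rw [← (key T₁.1 T₁.2).choose_spec, ← (key T₂.1 T₂.2).choose_spec]
    exact congrArg Ψ h
  -- cardinality of `D`
  have hfib : ∀ A : Idx, Nat.card
      (MultilinearMap (ZMod p) (fun _ : {i // i ∈ A.1} => (Fin n → ZMod p)) (ZMod p) ×
       MultilinearMap (ZMod p) (fun _ : {i // i ∉ A.1} => (Fin n → ZMod p)) (ZMod p))
      ≤ p ^ (n ^ (d - 1) + n) := by
    intro A
    have hcard1 : Fintype.card {i // i ∈ A.1} = A.1.card := Fintype.card_coe _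
    have hcard2 : Fintype.card {i // i ∉ A.1} = d - A.1.card := by
      rw [Fintype.card_subtype_compl, hcard1, Fintype.card_fin]
    have ha : 1 ≤ A.1.card := A.2.1.card_pos
    have hb : A.1.card < d := by
      have := Finset.card_lt_card (Finset.ssubset_univ_iff.mpr A.2.2)
      simpa using this
    rw [Nat.card_prod]
    calc Nat.card _ * Nat.card _
        ≤ p ^ n ^ Fintype.card {i // i ∈ A.1} * p ^ n ^ Fintype.card {i // i ∉ A.1} :=
          Nat.mul_le_mul ml_card ml_card
      _ = p ^ (n ^ A.1.card + n ^ (d - A.1.card)) := by rw [hcard1, hcard2, pow_add]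
      _ ≤ p ^ (n ^ (d - 1) + n) := by
          apply Nat.pow_le_pow_right (by omega)
          have := exp_bound (n := n) (by omega) ha (b := d - A.1.card) (by omega)
          have he : A.1.card + (d - A.1.card) - 1 = d - 1 := by omega
          rw [he] at this
          omega
  have hIdx : Nat.card Idx ≤ 2 ^ d := by
    calc Nat.card Idx ≤ Nat.card (Finset (Fin d)) :=
          Nat.card_le_card_of_injective Subtype.val Subtype.val_injective
      _ = 2 ^ d := by simp [Nat.card_eq_fintype_card]
  have hD : Nat.card D ≤ p ^ (2 * n ^ (d - 1)) := by
    calc Nat.card D ≤ Nat.card Idx * p ^ (n ^ (d - 1) + n) := card_sigma_le _ hfib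
      _ ≤ 2 ^ d * p ^ (n ^ (d - 1) + n) := Nat.mul_le_mul_right _ hIdx
      _ ≤ p ^ d * p ^ (n ^ (d - 1) + n) :=
          Nat.mul_le_mul_right _ (Nat.pow_le_pow_left hp2 d)
      _ = p ^ (d + (n ^ (d - 1) + n)) := by rw [← pow_add]
      _ ≤ p ^ (2 * n ^ (d - 1)) := by
          apply Nat.pow_le_pow_right (by omega)
          have h1 : n * n ≤ n ^ (d - 1) := by
            calc n * n = n ^ 2 := (sq n).symm
              _ ≤ n ^ (d - 1) := Nat.pow_le_pow_right (by omega) (by omega)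
          nlinarith [hn3, hnd]
  calc Nat.card {T : Tensor p n d // prank T ≤ r}
      ≤ Nat.card (Fin r → D) := Nat.card_le_card_of_injective θ θinj
    _ = Nat.card D ^ r := by rw [Nat.card_fun]; simp
    _ ≤ (p ^ (2 * n ^ (d - 1))) ^ r := Nat.pow_le_pow_left hD r
    _ = p ^ (2 * n ^ (d - 1) * r) := by rw [← pow_mul]
end

section
/- Let p be a prime, d ≥ 2 and n ≥ 1 integers, and T : (𝔽_p^n)^d → 𝔽_p a d-tensor. Then the analytic rank of T is at most the partition rank of T, i.e., arank(T) ≤ prank(T). -/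
/-- The bias of a `d`-tensor `T` with respect to a nontrivial additive character `χ`:
`bias(T) = E_{x_1,…,x_d ∈ 𝔽_p^n} χ(T(x_1,…,x_d))` (a nonnegative real number, recorded here
via the real part). -/
noncomputable def bias {p n d : ℕ} [NeZero p] (T : Tensor p n d)
    (χ : AddChar (ZMod p) ℂ) : ℂ :=
  (∑ x : Fin d → (Fin n → ZMod p), χ (T x)) / (Fintype.card (Fin d → (Fin n → ZMod p)) : ℂ)

/-- The analytic rank of a `d`-tensor: `arank(T) = −log_p bias(T)`. -/
noncomputable def arank {p n d : ℕ} [NeZero p] (T : Tensor p n d)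
    (χ : AddChar (ZMod p) ℂ) : ℝ :=
  - Real.logb p (bias T χ).re

open Finset

namespace StmtAux


variable {p n d : ℕ} [NeZero p]

/-- insert value `v` at coordinate `j`, other coordinates given by `x'`. -/
def ins (j : Fin d) (x' : {k : Fin d // k ≠ j} → (Fin n → ZMod p))
    (v : Fin n → ZMod p) : Fin d → (Fin n → ZMod p) :=
  fun k => if h : k = j then v else x' ⟨k, h⟩

lemma ins_apply_ne (j : Fin d) (x' : {k : Fin d // k ≠ j} → (Fin n → ZMod p))
    (v : Fin n → ZMod p) {k : Fin d} (h : k ≠ j) : ins j x' v k = x' ⟨k, h⟩ :=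
  dif_neg h

lemma update_ins (j : Fin d) (x' : {k : Fin d // k ≠ j} → (Fin n → ZMod p))
    (v w : Fin n → ZMod p) : Function.update (ins j x' w) j v = ins j x' v := by
  funext k
  by_cases h : k = j
  · subst h; simp [ins]
  · simp [Function.update_of_ne h, ins, h]

lemma sum_split {M : Type*} [AddCommMonoid M] (j : Fin d)
    (F : (Fin d → (Fin n → ZMod p)) → M) :
    ∑ x, F x = ∑ x' : {k : Fin d // k ≠ j} → (Fin n → ZMod p), ∑ v, F (ins j x' v) := by
  rw [← Equiv.sum_comp (Equiv.funSplitAt j (Fin n → ZMod p)).symm F, Fintype.sum_prod_type,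
    Finset.sum_comm]
  refine Finset.sum_congr rfl fun x' _ => Finset.sum_congr rfl fun v _ => ?_
  congr 1
  funext k
  by_cases h : k = j
  · subst h; simp [ins, Equiv.funSplitAt, Equiv.piSplitAt]
  · simp [ins, h, Equiv.funSplitAt, Equiv.piSplitAt]


/-- kernel counting: an additive map to `W` has kernel of index at most `card W`. -/
lemma card_le_card_ker {W : Type*} [AddCommGroup W] [Fintype W] [DecidableEq W]
    (f : (Fin n → ZMod p) →+ W) :
    Fintype.card (Fin n → ZMod p) ≤
      Fintype.card W * (univ.filter fun v => f v = 0).card := by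
  classical
  have h1 : (univ.filter fun v => f v = 0).card = Nat.card f.ker := by
    rw [Nat.card_eq_fintype_card, Fintype.card_subtype]
    congr 1
    ext v
    simp [AddMonoidHom.mem_ker]
  have h2 : f.ker.index * Nat.card f.ker = Nat.card (Fin n → ZMod p) :=
    AddSubgroup.index_mul_card f.ker
  have h3 : f.ker.index ≤ Fintype.card W := by
    rw [AddSubgroup.index_ker]
    calc Nat.card f.range ≤ Nat.card W :=
          Nat.card_le_card_of_injective _ Subtype.val_injective
    _ = Fintype.card W := Nat.card_eq_fintype_card
  calc Fintype.card (Fin n → ZMod p) = f.ker.index * Nat.card f.ker := by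
        rw [h2, Nat.card_eq_fintype_card]
  _ ≤ Fintype.card W * (univ.filter fun v => f v = 0).card := by
        rw [h1]; exact Nat.mul_le_mul_right _ h3


set_option maxHeartbeats 2000000 in
lemma count_lemma {r : ℕ} (S : Fin r → Finset (Fin d))
    (A : Fin r → (Fin d → (Fin n → ZMod p)) → ZMod p)
    (hne : ∀ i, (S i).Nonempty)
    (hdep : ∀ i (x y : Fin d → Fin n → ZMod p), (∀ k ∈ S i, x k = y k) → A i x = A i y)
    (hadd : ∀ i, ∀ j ∈ S i, ∀ (x : Fin d → Fin n → ZMod p) (a b : Fin n → ZMod p),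
      A i (Function.update x j (a + b)) =
        A i (Function.update x j a) + A i (Function.update x j b))
    (U : Finset (Fin d)) (I : Finset (Fin r)) (hSU : ∀ i ∈ I, S i ⊆ U) :
    Fintype.card (Fin d → Fin n → ZMod p) ≤
      p ^ I.card *
        (univ.filter fun x : Fin d → Fin n → ZMod p => ∀ i ∈ I, A i x = 0).card := by
  classical
  induction U using Finset.strongInduction generalizing I with
  | _ U ih =>
  rcases I.eq_empty_or_nonempty with rfl | ⟨i₀, hi₀⟩
  · simp
  obtain ⟨j, hjU⟩ : U.Nonempty := (hne i₀).mono (hSU i₀ hi₀)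
  set I₁ := I.filter (fun i => j ∈ S i) with hI₁
  set I₂ := I.filter (fun i => ¬ j ∈ S i) with hI₂
  have hSU' : ∀ i ∈ I₂, S i ⊆ U.erase j := by
    intro i hi
    exact Finset.subset_erase.2
      ⟨hSU i (Finset.mem_of_mem_filter _ hi), (Finset.mem_filter.1 hi).2⟩
  have step1 := ih (U.erase j) (Finset.erase_ssubset hjU) I₂ hSU'
  have key : (univ.filter fun x => ∀ i ∈ I₂, A i x = 0).card ≤
      p ^ I₁.card * (univ.filter fun x => ∀ i ∈ I, A i x = 0).card := by
    have fiber : ∀ (P : (Fin d → Fin n → ZMod p) → Prop) (_ : DecidablePred P),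
        (univ.filter P).card =
          ∑ x' : {k : Fin d // k ≠ j} → Fin n → ZMod p,
            (univ.filter fun v => P (ins j x' v)).card := by
      intro P _
      rw [Finset.card_filter, sum_split j]
      exact Finset.sum_congr rfl fun x' _ => (Finset.card_filter _ _).symm
    have perfiber : ∀ x' : {k : Fin d // k ≠ j} → Fin n → ZMod p,
        (univ.filter fun v => ∀ i ∈ I₂, A i (ins j x' v) = 0).card ≤
          p ^ I₁.card * (univ.filter fun v => ∀ i ∈ I, A i (ins j x' v) = 0).card := by
      intro x'
      have hconst : ∀ i ∈ I₂, ∀ v, A i (ins j x' v) = A i (ins j x' 0) := by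
        intro i hi v
        apply hdep
        intro k hk
        have hkj : k ≠ j := fun h => (Finset.mem_filter.1 hi).2 (h ▸ hk)
        rw [ins_apply_ne j x' v hkj, ins_apply_ne j x' 0 hkj]
      by_cases hgood : ∀ i ∈ I₂, A i (ins j x' 0) = 0
      · have lhs_eq : (univ.filter fun v => ∀ i ∈ I₂, A i (ins j x' v) = 0).card
            = Fintype.card (Fin n → ZMod p) := by
          rw [Finset.filter_true_of_mem, Finset.card_univ]
          intro v _ i hi
          rw [hconst i hi v]
          exact hgood i hi
        rw [lhs_eq]
        set c := ins j x' 0 with hc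
        set F : (Fin n → ZMod p) →+ ({i // i ∈ I₁} → ZMod p) :=
          AddMonoidHom.mk' (fun v i => A i.1 (Function.update c j v)) (by
            intro a b
            funext i
            exact hadd i.1 j (Finset.mem_filter.1 i.2).2 c a b) with hF
        have hker := card_le_card_ker F
        have hcard : Fintype.card ({i // i ∈ I₁} → ZMod p) = p ^ I₁.card := by
          rw [Fintype.card_fun, ZMod.card, Fintype.card_coe]
        have hfe : (univ.filter fun v => F v = 0)
            = (univ.filter fun v => ∀ i ∈ I, A i (ins j x' v) = 0) := by
          apply Finset.filter_congr
          intro v _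
          have hFv : F v = 0 ↔ ∀ i ∈ I₁, A i (Function.update c j v) = 0 := by
            rw [funext_iff]
            constructor
            · intro h i hi; exact h ⟨i, hi⟩
            · intro h i; exact h i.1 i.2
          rw [hFv]
          constructor
          · intro h i hi
            by_cases hjs : j ∈ S i
            · have := h i (Finset.mem_filter.2 ⟨hi, hjs⟩)
              rwa [hc, update_ins] at this
            · rw [hconst i (Finset.mem_filter.2 ⟨hi, hjs⟩) v]
              exact hgood i (Finset.mem_filter.2 ⟨hi, hjs⟩)
          · intro h i hi
            rw [hc, update_ins]
            exact h i (Finset.mem_filter.1 hi).1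
        rw [hfe, hcard] at hker
        exact hker
      · have hempty : (univ.filter fun v => ∀ i ∈ I₂, A i (ins j x' v) = 0) = ∅ := by
          rw [Finset.filter_eq_empty_iff]
          intro v _ hv
          apply hgood
          intro i hi
          have := hv i hi
          rwa [hconst i hi v] at this
        simp [hempty]
    calc (univ.filter fun x => ∀ i ∈ I₂, A i x = 0).card
        = ∑ x' : {k : Fin d // k ≠ j} → Fin n → ZMod p,
            (univ.filter fun v => ∀ i ∈ I₂, A i (ins j x' v) = 0).card :=
          fiber (fun x => ∀ i ∈ I₂, A i x = 0) (by infer_instance)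
      _ ≤ ∑ x' : {k : Fin d // k ≠ j} → Fin n → ZMod p,
            p ^ I₁.card * (univ.filter fun v => ∀ i ∈ I, A i (ins j x' v) = 0).card :=
          Finset.sum_le_sum fun x' _ => perfiber x'
      _ = p ^ I₁.card * ∑ x' : {k : Fin d // k ≠ j} → Fin n → ZMod p,
            (univ.filter fun v => ∀ i ∈ I, A i (ins j x' v) = 0).card :=
          (Finset.mul_sum _ _ _).symm
      _ = p ^ I₁.card * (univ.filter fun x => ∀ i ∈ I, A i x = 0).card :=
          congrArg (p ^ I₁.card * ·) (fiber (fun x => ∀ i ∈ I, A i x = 0) (by infer_instance)).symm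
  calc Fintype.card (Fin d → Fin n → ZMod p)
      ≤ p ^ I₂.card * (univ.filter fun x => ∀ i ∈ I₂, A i x = 0).card := step1
    _ ≤ p ^ I₂.card * (p ^ I₁.card * (univ.filter fun x => ∀ i ∈ I, A i x = 0).card) :=
        Nat.mul_le_mul_left _ key
    _ = p ^ I.card * (univ.filter fun x => ∀ i ∈ I, A i x = 0).card := by
        rw [← mul_assoc, ← pow_add]
        congr 2
        rw [hI₂, hI₁, add_comm]
        exact Finset.card_filter_add_card_filter_not (p := fun i => j ∈ S i)


lemma comp_update {q : Fin d → Prop} [DecidablePred q] (x : Fin d → Fin n → ZMod p)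
    {j : Fin d} (hj : q j) (v : Fin n → ZMod p) :
    (fun i : {i // q i} => Function.update x j v i.1) =
      Function.update (fun i : {i // q i} => x i.1) ⟨j, hj⟩ v := by
  funext i
  rcases eq_or_ne i ⟨j, hj⟩ with rfl | hne
  · simp
  · have h1 : i.1 ≠ j := fun h => hne (Subtype.ext h)
    rw [Function.update_of_ne h1, Function.update_of_ne hne]

lemma orient (T : Tensor p n d) (h : PRankOne T) (j₀ : Fin d) :
    ∃ S : Finset (Fin d), S.Nonempty ∧ j₀ ∉ S ∧
      ∃ Af Bf : (Fin d → (Fin n → ZMod p)) → ZMod p,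
        (∀ x, T x = Af x * Bf x) ∧
        (∀ x y, (∀ k ∈ S, x k = y k) → Af x = Af y) ∧
        (∀ j ∈ S, ∀ x a b, Af (Function.update x j (a + b)) =
          Af (Function.update x j a) + Af (Function.update x j b)) := by
  classical
  obtain ⟨A, hA, hAu, T₁, T₂, hT⟩ := h
  by_cases hj : j₀ ∈ A
  · have hAc : Aᶜ.Nonempty := by
      by_contra hne
      rw [Finset.not_nonempty_iff_eq_empty, Finset.compl_eq_empty_iff] at hne
      exact hAu hne
    refine ⟨Aᶜ, hAc, by simp [hj],
      (fun x => T₂ fun i => x i.1), (fun x => T₁ fun i => x i.1), ?_, ?_, ?_⟩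
    · intro x; rw [hT x, mul_comm]
    · intro x y hxy
      show T₂ (fun i : {i // i ∉ A} => x i.1) = T₂ (fun i : {i // i ∉ A} => y i.1)
      congr 1
      funext i
      exact hxy i.1 (Finset.mem_compl.2 i.2)
    · intro j hjS x a b
      have hj' : ¬ j ∈ A := Finset.mem_compl.1 hjS
      show T₂ (fun i : {i // i ∉ A} => Function.update x j (a + b) i.1) =
        T₂ (fun i : {i // i ∉ A} => Function.update x j a i.1) +
          T₂ (fun i : {i // i ∉ A} => Function.update x j b i.1)
      rw [comp_update (q := fun i => ¬ i ∈ A) x hj' (a + b),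
        comp_update (q := fun i => ¬ i ∈ A) x hj' a,
        comp_update (q := fun i => ¬ i ∈ A) x hj' b]
      exact T₂.map_update_add _ _ a b
  · refine ⟨A, hA, hj,
      (fun x => T₁ fun i => x i.1), (fun x => T₂ fun i => x i.1), ?_, ?_, ?_⟩
    · intro x; rw [hT x]
    · intro x y hxy
      show T₁ (fun i : {i // i ∈ A} => x i.1) = T₁ (fun i : {i // i ∈ A} => y i.1)
      congr 1
      funext i
      exact hxy i.1 i.2
    · intro j hjS x a b
      show T₁ (fun i : {i // i ∈ A} => Function.update x j (a + b) i.1) =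
        T₁ (fun i : {i // i ∈ A} => Function.update x j a i.1) +
          T₁ (fun i : {i // i ∈ A} => Function.update x j b i.1)
      rw [comp_update (q := fun i => i ∈ A) x hjS (a + b),
        comp_update (q := fun i => i ∈ A) x hjS a,
        comp_update (q := fun i => i ∈ A) x hjS b]
      exact T₁.map_update_add _ _ a b

lemma exists_decomp (hd : 2 ≤ d) (hdz : NeZero d) (T : Tensor p n d) :
    {r | ∃ f : Fin r → Tensor p n d, (∀ i, PRankOne (f i)) ∧ T = ∑ i, f i}.Nonempty := by
  classical
  haveI := hdz
  set Em : (Fin d → Fin n) → Tensor p n d := fun m =>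
    (T fun i => (Pi.single (m i) 1 : Fin n → ZMod p)) •
      ((MultilinearMap.mkPiAlgebra (ZMod p) (Fin d) (ZMod p)).compLinearMap
        (fun i => LinearMap.proj (m i))) with hEmdef
  have hEm : ∀ m x, Em m x = (T fun i => (Pi.single (m i) 1 : Fin n → ZMod p)) * ∏ i, x i (m i) := by
    intro m x
    simp [hEmdef, MultilinearMap.smul_apply, MultilinearMap.compLinearMap_apply,
      MultilinearMap.mkPiAlgebra_apply, smul_eq_mul]
  have hsum : ∀ x, T x = ∑ m : Fin d → Fin n, Em m x := by
    intro x
    have hx : x = fun i => ∑ j : Fin n, x i j • (Pi.single j 1 : Fin n → ZMod p) := by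
      funext i k
      simp [Pi.single_apply, Finset.sum_apply, mul_ite]
    calc T x = T (fun i => ∑ j : Fin n, x i j • (Pi.single j 1 : Fin n → ZMod p)) := by
          conv_lhs => rw [hx]
      _ = ∑ m : Fin d → Fin n, T (fun i => x i (m i) • (Pi.single (m i) 1 : Fin n → ZMod p)) :=
          T.map_sum (fun i j => x i j • (Pi.single j 1 : Fin n → ZMod p))
      _ = ∑ m : Fin d → Fin n, Em m x := by
          refine Finset.sum_congr rfl fun m _ => ?_
          rw [T.map_smul_univ, hEm, smul_eq_mul, mul_comm]
  have hone : ∀ m, PRankOne (Em m) := by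
    intro m
    set z : Fin d := ⟨0, by omega⟩ with hz
    set o : Fin d := ⟨1, by omega⟩ with ho
    have h01 : z ≠ o := by
      intro h
      have := congrArg Fin.val h
      simp [hz, ho] at this
    refine ⟨{z}, ⟨z, Finset.mem_singleton_self z⟩, ?_, ?_⟩
    · intro h
      exact h01 (Finset.mem_singleton.1 (h ▸ Finset.mem_univ o)).symm
    · refine ⟨(T fun i => (Pi.single (m i) 1 : Fin n → ZMod p)) •
        ((MultilinearMap.mkPiAlgebra (ZMod p) {i // i ∈ ({z} : Finset (Fin d))}
          (ZMod p)).compLinearMap (fun i => LinearMap.proj (m i.1))),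
        (MultilinearMap.mkPiAlgebra (ZMod p) {i // i ∉ ({z} : Finset (Fin d))}
          (ZMod p)).compLinearMap (fun i => LinearMap.proj (m i.1)), ?_⟩
      intro x
      rw [hEm]
      simp only [MultilinearMap.smul_apply, MultilinearMap.compLinearMap_apply,
        MultilinearMap.mkPiAlgebra_apply, LinearMap.proj_apply, smul_eq_mul]
      rw [mul_assoc]
      congr 1
      have h1 : ∏ i : {i // i ∈ ({z} : Finset (Fin d))}, x i.1 (m i.1)
          = ∏ i ∈ ({z} : Finset (Fin d)), x i (m i) :=
        (Finset.prod_subtype _ (fun i => Iff.rfl) (fun i => x i (m i))).symm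
      have h2 : ∏ i : {i // i ∉ ({z} : Finset (Fin d))}, x i.1 (m i.1)
          = ∏ i ∈ ({z} : Finset (Fin d))ᶜ, x i (m i) :=
        (Finset.prod_subtype _ (fun i => Finset.mem_compl) (fun i => x i (m i))).symm
      rw [h1, h2, Finset.prod_mul_prod_compl]
  have hcard : Fintype.card (Fin d → Fin n) = n ^ d := by
    rw [Fintype.card_fun, Fintype.card_fin, Fintype.card_fin]
  set e : (Fin d → Fin n) ≃ Fin (n ^ d) := Fintype.equivFinOfCardEq hcard with he
  refine ⟨n ^ d, fun i => Em (e.symm i), fun i => hone _, ?_⟩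
  refine MultilinearMap.ext fun x => ?_
  rw [MultilinearMap.sum_apply]
  rw [hsum x]
  exact (Equiv.sum_comp e.symm (fun m => Em m x)).symm

end StmtAux

/-- Let `p` be a prime, `d ≥ 2`, `n ≥ 1` and `T` a `d`-tensor on `𝔽_p^n`. Then
`arank(T) ≤ prank(T)`. -/
theorem stmt4 (p n d : ℕ) [hp : Fact p.Prime] (hd : 2 ≤ d) (hn : 1 ≤ n)
    (χ : AddChar (ZMod p) ℂ) (hχ : χ ≠ 1) (T : Tensor p n d) :
    arank T χ ≤ (prank T : ℝ) := by
  classical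
  have hp1 : 1 < p := hp.out.one_lt
  haveI : NeZero p := ⟨by omega⟩
  set r := prank T with hr
  obtain ⟨f, hf1, hf2⟩ :
      ∃ f : Fin r → Tensor p n d, (∀ i, PRankOne (f i)) ∧ T = ∑ i, f i :=
    Nat.sInf_mem (StmtAux.exists_decomp hd ⟨by omega⟩ T)
  set j₀ : Fin d := ⟨0, by omega⟩ with hj₀
  choose S hSne hSj Af Bf hmul hdep hadd using fun i => StmtAux.orient (f i) (hf1 i) j₀
  have hTx : ∀ x, T x = ∑ i, Af i x * Bf i x := by
    intro x
    rw [hf2, MultilinearMap.sum_apply]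
    exact Finset.sum_congr rfl fun i _ => hmul i x
  -- the counting bound
  have hcount := StmtAux.count_lemma S Af hSne hdep hadd (univ.erase j₀) univ
    (fun i _ k hk => Finset.mem_erase.2 ⟨fun h => hSj i (h ▸ hk), Finset.mem_univ k⟩)
  set N := Fintype.card (Fin d → Fin n → ZMod p) with hN
  set G := (univ.filter fun x : Fin d → Fin n → ZMod p =>
    ∀ i ∈ (univ : Finset (Fin r)), Af i x = 0) with hG
  have hNG : N ≤ p ^ r * G.card := by
    have : (univ : Finset (Fin r)).card = r := by
      rw [Finset.card_univ, Fintype.card_fin]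
    rw [← this]
    exact hcount
  -- real part bound: G.card ≤ re of the character sum
  have hre : (G.card : ℝ) ≤ (∑ x : Fin d → Fin n → ZMod p, χ (T x)).re := by
    have hGcard : G.card =
        ∑ x' : {k : Fin d // k ≠ j₀} → Fin n → ZMod p,
          (univ.filter fun v => ∀ i ∈ (univ : Finset (Fin r)),
            Af i (StmtAux.ins j₀ x' v) = 0).card := by
      rw [hG, Finset.card_filter, StmtAux.sum_split j₀]
      exact Finset.sum_congr rfl fun x' _ => (Finset.card_filter _ _).symm
    rw [StmtAux.sum_split j₀ (fun x => χ (T x)), Complex.re_sum, hGcard]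
    push_cast
    refine Finset.sum_le_sum fun x' _ => ?_
    have hconst : ∀ i v, Af i (StmtAux.ins j₀ x' v) = Af i (StmtAux.ins j₀ x' 0) := by
      intro i v
      apply hdep
      intro k hk
      have hkj : k ≠ j₀ := fun h => hSj i (h ▸ hk)
      rw [StmtAux.ins_apply_ne j₀ x' v hkj, StmtAux.ins_apply_ne j₀ x' 0 hkj]
    by_cases hgood : ∀ i, Af i (StmtAux.ins j₀ x' 0) = 0
    · -- all χ terms are 1
      have hT0 : ∀ v, T (StmtAux.ins j₀ x' v) = 0 := by
        intro v
        rw [hTx]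
        refine Finset.sum_eq_zero fun i _ => ?_
        rw [hconst i v, hgood i, zero_mul]
      have hsumv : (∑ v : Fin n → ZMod p, χ (T (StmtAux.ins j₀ x' v)))
          = (Fintype.card (Fin n → ZMod p) : ℂ) := by
        rw [Fintype.sum_congr _ (fun _ => (1 : ℂ)) (fun v => by rw [hT0 v, AddChar.map_zero_eq_one])]
        simp [Finset.card_univ]
      rw [hsumv, Complex.natCast_re]
      exact_mod_cast Nat.le_trans (Finset.card_filter_le _ _) Finset.card_univ.le
    · -- the filter is empty and the character sum has nonnegative real part
      have hempty : (univ.filter fun v => ∀ i ∈ (univ : Finset (Fin r)),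
          Af i (StmtAux.ins j₀ x' v) = 0) = ∅ := by
        rw [Finset.filter_eq_empty_iff]
        intro v _ hv
        apply hgood
        intro i
        have := hv i (Finset.mem_univ i)
        rwa [hconst i v] at this
      rw [hempty]
      -- nonnegativity via AddChar.sum_eq_ite
      set F : (Fin n → ZMod p) →+ ZMod p :=
        AddMonoidHom.mk' (fun v => T (Function.update (StmtAux.ins j₀ x' 0) j₀ v))
          (fun a b => T.map_update_add _ j₀ a b) with hF
      set ψ : AddChar (Fin n → ZMod p) ℂ := χ.compAddMonoidHom F with hψ
      have hTψ : ∀ v, χ (T (StmtAux.ins j₀ x' v)) = ψ v := by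
        intro v
        rw [hψ, AddChar.compAddMonoidHom_apply, hF]
        simp only [AddMonoidHom.mk'_apply]
        rw [StmtAux.update_ins]
      rw [Fintype.sum_congr _ _ hTψ, AddChar.sum_eq_ite ψ]
      split_ifs
      · simp only [Finset.card_empty, Nat.cast_zero, Complex.natCast_re]
        positivity
      · simp
  -- put everything together
  have hNpos : (0 : ℝ) < N := by
    have : 0 < N := Fintype.card_pos
    exact_mod_cast this
  have hppos : (0 : ℝ) < (p : ℝ) ^ r := by positivity
  have hbias : 1 / (p : ℝ) ^ r ≤ (bias T χ).re := by
    have h1 : (bias T χ).re = (∑ x : Fin d → Fin n → ZMod p, χ (T x)).re / N := by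
      rw [bias]
      rw [show ((N : ℕ) : ℂ) = ((N : ℝ) : ℂ) by push_cast; rfl]
      exact Complex.div_ofReal_re _ _
    rw [h1]
    have h2 : 1 / (p : ℝ) ^ r ≤ (G.card : ℝ) / N := by
      rw [div_le_div_iff₀ hppos hNpos]
      have := hNG
      have : (N : ℝ) ≤ (p : ℝ) ^ r * G.card := by exact_mod_cast hNG
      linarith
    refine le_trans h2 ?_
    gcongr
  have hbias0 : (0 : ℝ) < (bias T χ).re := lt_of_lt_of_le (by positivity) hbias
  have hpR : (1 : ℝ) < (p : ℝ) := by exact_mod_cast hp1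
  have hlog : -(r : ℝ) ≤ Real.logb p (bias T χ).re := by
    have hmono : Real.logb p (1 / (p : ℝ) ^ r) ≤ Real.logb p (bias T χ).re :=
      Real.logb_le_logb_of_le hpR (by positivity) hbias
    calc -(r : ℝ) = Real.logb p (1 / (p : ℝ) ^ r) := by
          rw [one_div, ← Real.rpow_natCast (p : ℝ) r, ← Real.rpow_neg (by positivity),
            Real.logb_rpow (by positivity) hpR.ne']
      _ ≤ _ := hmono
  show -Real.logb p (bias T χ).re ≤ (r : ℝ)
  linarith
end

section
/- Let p be a prime, d ≥ 1 and n ≥ 1 integers, and s a positive integer. Let U be any subspace of 𝔽_p^{binom(n+d-1, d)} of dimension at least s − 1 whose intersection with the image of φ_d has maximal size among subspaces of dimension s − 1, and let x_1, …, x_s be independent uniformly distributed random vectors in 𝔽_p^n. Then the probability that φ_d(x_1), …, φ_d(x_s) are linearly independent over 𝔽_p is at least (1 − P_{x ∈ 𝔽_p^n}[φ_d(x) ∈ U])^s, where x is uniform on 𝔽_p^n. -/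
/-- The degree-`d` Veronese map `𝔽_p^n → 𝔽_p^(binom(n+d-1,d))`, sending `x` to the vector of
all degree-`d` monomials in the coordinates of `x`, one coordinate for each multiset of size
`d` from `{1,…,n}`. -/
def veronese (p n d : ℕ) (x : Fin n → ZMod p) : Sym (Fin n) d → ZMod p :=
  fun m => ((m : Multiset (Fin n)).map x).prod

section Aux

open Module

variable {p n d : ℕ} [Fact p.Prime]

lemma veronese_smul (c : ZMod p) (x : Fin n → ZMod p) (m : Sym (Fin n) d) :
    veronese p n d (c • x) m = c ^ d * veronese p n d x m := by
  unfold veronese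
  have h1 : (m : Multiset (Fin n)).map (c • x) = (m : Multiset (Fin n)).map (fun i => c * x i) :=
    rfl
  rw [h1, Multiset.prod_map_mul (f := fun _ => c) (g := x)]
  congr 1
  rw [Multiset.map_const', Multiset.prod_replicate]
  congr 1
  exact m.2

lemma veronese_replicate (x : Fin n → ZMod p) (i : Fin n) :
    veronese p n d x ⟨Multiset.replicate d i, Multiset.card_replicate d i⟩ = x i ^ d := by
  simp [veronese, Multiset.map_replicate, Multiset.prod_replicate]

lemma veronese_zero (hd : 1 ≤ d) : veronese p n d (0 : Fin n → ZMod p) = 0 := by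
  funext m
  unfold veronese
  have : (m : Multiset (Fin n)).map (0 : Fin n → ZMod p)
      = Multiset.replicate d (0 : ZMod p) := by
    rw [show (0 : Fin n → ZMod p) = (fun _ => (0:ZMod p)) from rfl, Multiset.map_const']
    exact congrArg (fun k => Multiset.replicate k (0 : ZMod p)) m.2
  rw [this, Multiset.prod_replicate, zero_pow (by omega)]
  rfl

lemma veronese_eq_zero_iff (hd : 1 ≤ d) (x : Fin n → ZMod p) :
    veronese p n d x = 0 ↔ x = 0 := by
  constructor
  · intro h
    funext i
    have := congrFun h ⟨Multiset.replicate d i, Multiset.card_replicate d i⟩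
    rw [veronese_replicate] at this
    have := pow_eq_zero_iff (n := d) (by omega) |>.mp this
    simpa using this
  · rintro rfl; exact veronese_zero hd

lemma veronese_eq_iff (hd : 1 ≤ d) {x : Fin n → ZMod p} (hx : x ≠ 0) (y : Fin n → ZMod p) :
    veronese p n d y = veronese p n d x ↔ ∃ c : ZMod p, c ^ d = 1 ∧ y = c • x := by
  obtain ⟨d', rfl⟩ : ∃ d', d = d' + 1 := ⟨d - 1, (Nat.succ_pred_eq_of_pos hd).symm⟩
  constructor
  · intro h
    obtain ⟨i, hxi⟩ : ∃ i, x i ≠ 0 := by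
      by_contra hc
      push_neg at hc
      exact hx (funext hc)
    have h1 : y i ^ (d' + 1) = x i ^ (d' + 1) := by
      have := congrFun h ⟨Multiset.replicate (d'+1) i, Multiset.card_replicate _ i⟩
      rwa [veronese_replicate, veronese_replicate] at this
    have hyi : y i ≠ 0 := by
      intro h0
      rw [h0, zero_pow (by omega)] at h1
      exact pow_ne_zero _ hxi h1.symm
    have h2 : ∀ j, y i ^ d' * y j = x i ^ d' * x j := by
      intro j
      have hm : Multiset.card (Multiset.replicate d' i + {j}) = d' + 1 := by simp
      have := congrFun h ⟨Multiset.replicate d' i + {j}, hm⟩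
      simpa [veronese, Multiset.map_replicate, Multiset.prod_replicate, mul_comm] using this
    refine ⟨y i * (x i)⁻¹, ?_, ?_⟩
    · field_simp
      rw [div_pow, h1, div_self (pow_ne_zero _ hxi)]
    · funext j
      have hcross : y j * x i = y i * x j := by
        have hpow : y i ^ d' ≠ 0 := pow_ne_zero _ hyi
        apply mul_left_cancel₀ hpow
        linear_combination x i * h2 j - x j * h1
      show y j = y i * (x i)⁻¹ * x j
      field_simp
      linear_combination hcross
  · rintro ⟨c, hc, rfl⟩
    funext m
    rw [veronese_smul, hc, one_mul]

lemma fiber_card (hd : 1 ≤ d) {x : Fin n → ZMod p} (hx : x ≠ 0) :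
    Nat.card {y : Fin n → ZMod p // veronese p n d y = veronese p n d x}
      = Nat.card {c : ZMod p // c ^ d = 1} := by
  symm
  apply Nat.card_eq_of_bijective
    (f := fun c => (⟨c.1 • x, (veronese_eq_iff hd hx _).mpr ⟨c.1, c.2, rfl⟩⟩ :
      {y : Fin n → ZMod p // veronese p n d y = veronese p n d x}))
  constructor
  · rintro ⟨c, hc⟩ ⟨c', hc'⟩ h
    obtain ⟨i, hxi⟩ : ∃ i, x i ≠ 0 := by
      by_contra hcon; push_neg at hcon; exact hx (funext hcon)
    have := congrFun (Subtype.ext_iff.mp h) i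
    have : c * x i = c' * x i := this
    exact Subtype.ext (mul_right_cancel₀ hxi this)
  · rintro ⟨y, hy⟩
    obtain ⟨c, hc, hyc⟩ := (veronese_eq_iff hd hx y).mp hy
    exact ⟨⟨c, hc⟩, Subtype.ext hyc.symm⟩

lemma roots_pos : 1 ≤ Nat.card {c : ZMod p // c ^ d = 1} := by
  have : Nonempty {c : ZMod p // c ^ d = 1} := ⟨⟨1, one_pow d⟩⟩
  exact Nat.card_pos

lemma countX_formula (hd : 1 ≤ d) (W : Submodule (ZMod p) (Sym (Fin n) d → ZMod p)) :
    Nat.card {x : Fin n → ZMod p // veronese p n d x ∈ W}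
      = (Nat.card {v : Sym (Fin n) d → ZMod p // v ∈ W ∧ v ∈ Set.range (veronese p n d)} - 1)
          * Nat.card {c : ZMod p // c ^ d = 1} + 1 := by
  classical
  set φ := veronese p n d with hφ
  set r := Nat.card {c : ZMod p // c ^ d = 1} with hr
  rw [Nat.card_eq_fintype_card, Nat.card_eq_fintype_card, Fintype.card_subtype,
    Fintype.card_subtype]
  set S : Finset (Fin n → ZMod p) := Finset.univ.filter (fun x => φ x ∈ W) with hS
  set T : Finset (Sym (Fin n) d → ZMod p) :=
    Finset.univ.filter (fun v => v ∈ W ∧ v ∈ Set.range φ) with hT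
  have hmem : ∀ x ∈ S, φ x ∈ T := by
    intro x hx
    simp only [hS, hT, Finset.mem_filter, Finset.mem_univ, true_and] at hx ⊢
    exact ⟨hx, x, rfl⟩
  have hsum := Finset.card_eq_sum_card_fiberwise hmem
  have hfib : ∀ v ∈ T, (S.filter (fun x => φ x = v)).card = if v = 0 then 1 else r := by
    intro v hv
    simp only [hT, Finset.mem_filter, Finset.mem_univ, true_and] at hv
    obtain ⟨hvW, x0, rfl⟩ := hv
    have hfull : S.filter (fun x => φ x = φ x0) = Finset.univ.filter (fun x => φ x = φ x0) := by
      ext x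
      simp only [hS, Finset.mem_filter, Finset.mem_univ, true_and, Finset.filter_filter]
      constructor
      · rintro ⟨_, h⟩; exact h
      · intro h; exact ⟨h ▸ hvW, h⟩
    rw [hfull]
    split_ifs with h0
    · have hx0 : x0 = 0 := (veronese_eq_zero_iff hd x0).mp h0
      subst hx0
      have : Finset.univ.filter (fun x => φ x = φ (0 : Fin n → ZMod p)) = {0} := by
        ext x
        simp only [Finset.mem_filter, Finset.mem_univ, true_and, Finset.mem_singleton]
        rw [hφ, veronese_zero hd, veronese_eq_zero_iff hd]
      rw [this, Finset.card_singleton]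
    · have hx0 : x0 ≠ 0 := by
        intro hc; exact h0 (by rw [hc, hφ, veronese_zero hd])
      have := fiber_card hd hx0
      rw [Nat.card_eq_fintype_card, Fintype.card_subtype] at this
      rw [this]
  rw [hsum, Finset.sum_congr rfl hfib]
  have h0T : (0 : Sym (Fin n) d → ZMod p) ∈ T := by
    simp only [hT, Finset.mem_filter, Finset.mem_univ, true_and]
    exact ⟨W.zero_mem, 0, veronese_zero hd⟩
  rw [← Finset.sum_erase_add T _ h0T, if_pos rfl]
  congr 1
  have : ∀ v ∈ T.erase 0, (if v = 0 then 1 else r) = r := by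
    intro v hv
    rw [if_neg (Finset.ne_of_mem_erase hv)]
  rw [Finset.sum_congr rfl this, Finset.sum_const, Finset.card_erase_of_mem h0T, smul_eq_mul]

/-- Extend a subspace to one of any larger dimension. -/
lemma exists_super {K V : Type*} [Field K] [AddCommGroup V] [Module K V]
    [FiniteDimensional K V] (W : Submodule K V) (k : ℕ) (h1 : finrank K W ≤ k)
    (h2 : k ≤ finrank K V) : ∃ W' : Submodule K V, W ≤ W' ∧ finrank K W' = k := by
  suffices H : ∀ (j : ℕ) (W : Submodule K V), finrank K W ≤ k → k - finrank K W = j →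
      ∃ W' : Submodule K V, W ≤ W' ∧ finrank K W' = k by
    exact H (k - finrank K W) W h1 rfl
  intro j
  induction j with
  | zero => intro W h1' hj; exact ⟨W, le_rfl, by omega⟩
  | succ j ih =>
    intro W h1' hj
    have hlt : finrank K W < finrank K V := by omega
    obtain ⟨m, hm⟩ := Submodule.exists_of_finrank_lt W hlt
    have hmW : m ∉ W := by simpa using hm 1 one_ne_zero
    have hm0 : m ≠ 0 := fun h => hmW (h ▸ W.zero_mem)
    set W2 := W ⊔ Submodule.span K {m} with hW2
    have hinf : W ⊓ Submodule.span K {m} = ⊥ := by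
      rw [eq_bot_iff]
      rintro v ⟨hvW, hvm⟩
      obtain ⟨a, rfl⟩ := Submodule.mem_span_singleton.mp hvm
      rcases eq_or_ne a 0 with h | h
      · simp [h]
      · exact absurd hvW (hm a h)
    have hr2 : finrank K W2 = finrank K W + 1 := by
      have h := Submodule.finrank_sup_add_finrank_inf_eq W (Submodule.span K {m})
      rw [hinf, finrank_span_singleton hm0] at h
      simpa using h
    obtain ⟨W', hW'1, hW'2⟩ := ih W2 (by omega) (by omega)
    exact ⟨W', le_trans le_sup_left hW'1, hW'2⟩

end Aux

/-- Let `U` be a subspace of `𝔽_p^(binom(n+d-1,d))` of dimension at least `s − 1` whose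
intersection with the image of `φ_d` has maximal size among subspaces of dimension `s − 1`.
For `x_1, …, x_s` independent uniform in `𝔽_p^n`, the probability that
`φ_d(x_1), …, φ_d(x_s)` are linearly independent is at least
`(1 − P_x[φ_d(x) ∈ U])^s`. -/
theorem stmt7 (p n d s : ℕ) [hp : Fact p.Prime] (hd : 1 ≤ d) (hn : 1 ≤ n) (hs : 0 < s)
    (U : Submodule (ZMod p) (Sym (Fin n) d → ZMod p))
    (hdim : s - 1 ≤ Module.finrank (ZMod p) U)
    (hmax : ∀ W : Submodule (ZMod p) (Sym (Fin n) d → ZMod p),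
      Module.finrank (ZMod p) W = s - 1 →
      Nat.card {v : Sym (Fin n) d → ZMod p // v ∈ W ∧ v ∈ Set.range (veronese p n d)} ≤
        Nat.card {v : Sym (Fin n) d → ZMod p // v ∈ U ∧ v ∈ Set.range (veronese p n d)}) :
    (1 - (Nat.card {x : Fin n → ZMod p // veronese p n d x ∈ U} : ℝ)
          / (Fintype.card (Fin n → ZMod p) : ℝ)) ^ s ≤
      (Nat.card {f : Fin s → (Fin n → ZMod p) //
          LinearIndependent (ZMod p) (fun i : Fin s => veronese p n d (f i))} : ℝ)
        / (Fintype.card (Fin s → (Fin n → ZMod p)) : ℝ) := by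
  classical
  set K := ZMod p
  set φ := veronese p n d with hφ
  set N := Fintype.card (Fin n → ZMod p) with hN
  set A := Nat.card {x : Fin n → ZMod p // φ x ∈ U} with hA
  -- Step 1: any subspace of dimension ≤ s-1 captures at most A Veronese points.
  have hA_le : ∀ W : Submodule K (Sym (Fin n) d → ZMod p),
      Module.finrank K W ≤ s - 1 → Nat.card {x : Fin n → ZMod p // φ x ∈ W} ≤ A := by
    intro W hW
    have hsub : s - 1 ≤ Module.finrank K (Sym (Fin n) d → ZMod p) :=
      le_trans hdim (Submodule.finrank_le U)
    obtain ⟨W', hWW', hrk⟩ := exists_super W (s - 1) hW hsub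
    have step1 : Nat.card {x : Fin n → ZMod p // φ x ∈ W}
        ≤ Nat.card {x : Fin n → ZMod p // φ x ∈ W'} := by
      refine Nat.card_le_card_of_injective (fun x => ⟨x.1, hWW' x.2⟩) ?_
      rintro ⟨a, ha⟩ ⟨b, hb⟩ h
      simp only [Subtype.mk.injEq] at h
      exact Subtype.ext h
    refine le_trans step1 ?_
    rw [hA, countX_formula hd W', countX_formula hd U]
    have hcv := hmax W' hrk
    have hr := roots_pos (p := p) (d := d)
    exact Nat.add_le_add_right
      (Nat.mul_le_mul_right _ (Nat.sub_le_sub_right hcv 1)) 1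
  -- Step 2: the key iff for prepending a vector.
  have key_iff : ∀ (k : ℕ) (x : Fin n → ZMod p) (g : Fin k → (Fin n → ZMod p)),
      LinearIndependent K (fun i : Fin (k+1) => φ ((Fin.cons x g : Fin (k+1) → (Fin n → ZMod p)) i))
        ↔ LinearIndependent K (fun i : Fin k => φ (g i)) ∧
          φ x ∉ Submodule.span K (Set.range (fun i : Fin k => φ (g i))) := by
    intro k x g
    have hfun : (fun i : Fin (k+1) => φ ((Fin.cons x g : Fin (k+1) → (Fin n → ZMod p)) i))
        = Fin.cons (φ x) (fun i : Fin k => φ (g i)) := by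
      funext i
      induction i using Fin.cases with
      | zero => rfl
      | succ j => rfl
    rw [hfun, linearIndependent_fin_cons]
  -- Step 3: main counting induction.
  have main : ∀ k : ℕ, k ≤ s →
      (N - A) ^ k ≤ Nat.card {f : Fin k → (Fin n → ZMod p) //
        LinearIndependent K (fun i : Fin k => φ (f i))} := by
    intro k
    induction k with
    | zero =>
      intro _
      rw [pow_zero]
      have : Nonempty {f : Fin 0 → (Fin n → ZMod p) //
          LinearIndependent K (fun i : Fin 0 => φ (f i))} :=
        ⟨⟨fun i => i.elim0, linearIndependent_empty_type⟩⟩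
      exact Nat.card_pos
    | succ k ih =>
      intro hk1
      have ihk := ih (by omega)
      -- the sigma decomposition
      have hbij : Nat.card (Σ g : {g : Fin k → (Fin n → ZMod p) //
            LinearIndependent K (fun i : Fin k => φ (g i))},
            {x : Fin n → ZMod p //
              φ x ∉ Submodule.span K (Set.range (fun i : Fin k => φ (g.1 i)))})
          = Nat.card {f : Fin (k+1) → (Fin n → ZMod p) //
              LinearIndependent K (fun i : Fin (k+1) => φ (f i))} := by
        apply Nat.card_eq_of_bijective
          (f := fun gx => ⟨(Fin.cons gx.2.1 gx.1.1 : Fin (k+1) → (Fin n → ZMod p)),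
            (key_iff k gx.2.1 gx.1.1).mpr ⟨gx.1.2, gx.2.2⟩⟩)
        constructor
        · rintro ⟨⟨g, hg⟩, ⟨x, hx⟩⟩ ⟨⟨g', hg'⟩, ⟨x', hx'⟩⟩ h
          simp only [Subtype.mk.injEq] at h
          have hx1 : x = x' := by
            have := congrFun h 0
            simpa using this
          have hg1 : g = g' := by
            funext j
            have := congrFun h j.succ
            simpa using this
          subst hx1; subst hg1; rfl
        · rintro ⟨f, hf⟩
          have hf' : LinearIndependent K
              (fun i : Fin (k+1) => φ ((Fin.cons (f 0) (Fin.tail f) : Fin (k+1) → (Fin n → ZMod p)) i)) := by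
            rw [Fin.cons_self_tail]; exact hf
          obtain ⟨hQ, hR⟩ := (key_iff k (f 0) (Fin.tail f)).mp hf'
          exact ⟨⟨⟨Fin.tail f, hQ⟩, ⟨f 0, hR⟩⟩, Subtype.ext (Fin.cons_self_tail f)⟩
      rw [← hbij, Nat.card_eq_fintype_card, Fintype.card_sigma]
      -- each fiber has at least N - A elements
      have hfiber : ∀ g : {g : Fin k → (Fin n → ZMod p) //
            LinearIndependent K (fun i : Fin k => φ (g i))},
          N - A ≤ Fintype.card {x : Fin n → ZMod p //
            φ x ∉ Submodule.span K (Set.range (fun i : Fin k => φ (g.1 i)))} := by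
        intro g
        set Wg := Submodule.span K (Set.range (fun i : Fin k => φ (g.1 i))) with hWg
        have hrank : Module.finrank K Wg ≤ s - 1 := by
          have h1 : Module.finrank K Wg ≤ k := by
            have := finrank_range_le_card (R := K) (fun i : Fin k => φ (g.1 i))
            simpa [Set.finrank, Fintype.card_fin] using this
          exact le_trans h1 (Nat.le_sub_one_of_lt (lt_of_lt_of_le (Nat.lt_succ_self k) hk1))
        have hle : Nat.card {x : Fin n → ZMod p // φ x ∈ Wg} ≤ A := hA_le Wg hrank
        rw [Fintype.card_subtype_compl (fun x => φ x ∈ Wg)]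
        rw [Nat.card_eq_fintype_card] at hle
        exact Nat.sub_le_sub_left hle _
      calc (N - A) ^ (k + 1) = (N - A) ^ k * (N - A) := pow_succ _ _
        _ ≤ Nat.card {g : Fin k → (Fin n → ZMod p) //
              LinearIndependent K (fun i : Fin k => φ (g i))} * (N - A) :=
            Nat.mul_le_mul_right _ ihk
        _ ≤ ∑ g : {g : Fin k → (Fin n → ZMod p) //
              LinearIndependent K (fun i : Fin k => φ (g i))},
              Fintype.card {x : Fin n → ZMod p //
                φ x ∉ Submodule.span K (Set.range (fun i : Fin k => φ (g.1 i)))} := by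
            have := Finset.card_nsmul_le_sum Finset.univ
              (fun g : {g : Fin k → (Fin n → ZMod p) //
                LinearIndependent K (fun i : Fin k => φ (g i))} =>
                Fintype.card {x : Fin n → ZMod p //
                  φ x ∉ Submodule.span K (Set.range (fun i : Fin k => φ (g.1 i)))})
              (N - A) (fun g _ => hfiber g)
            rw [Nat.card_eq_fintype_card]
            simpa [Finset.card_univ, mul_comm, smul_eq_mul] using this
  -- Step 4: arithmetic.
  have hN0 : 0 < N := Fintype.card_pos
  have hAN : A ≤ N := by
    rw [hA, hN]
    exact le_trans (Nat.card_le_card_of_injective Subtype.val Subtype.val_injective)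
      (le_of_eq (Nat.card_eq_fintype_card))
  have hcards : Fintype.card (Fin s → (Fin n → ZMod p)) = N ^ s := by
    rw [Fintype.card_fun, Fintype.card_fin, hN]
  have hfinal := main s le_rfl
  have h1 : (1 : ℝ) - (A : ℝ) / (N : ℝ) = ((N - A : ℕ) : ℝ) / (N : ℝ) := by
    rw [Nat.cast_sub hAN]
    field_simp
  rw [h1, div_pow, hcards]
  rw [div_le_div_iff₀ (by positivity) (by positivity)]
  push_cast
  rw [← Nat.cast_pow, ← Nat.cast_pow]
  have : ((N - A) ^ s : ℕ) ≤ (Nat.card {f : Fin s → (Fin n → ZMod p) //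
      LinearIndependent K (fun i : Fin s => φ (f i))}) := hfinal
  have hcast : (((N - A) ^ s : ℕ) : ℝ) ≤ (Nat.card {f : Fin s → (Fin n → ZMod p) //
      LinearIndependent K (fun i : Fin s => φ (f i))} : ℝ) := Nat.cast_le.mpr this
  nlinarith [pow_pos (show (0:ℝ) < (N:ℝ) by positivity) s, hcast,
    mul_le_mul_of_nonneg_right hcast (le_of_lt (pow_pos (show (0:ℝ) < (N:ℝ) by positivity) s))]
end

section
/- Let p be a prime, n ≥ d ≥ 3 integers, and χ : 𝔽_p → ℂ a nontrivial additive character. Let U^⊥ be any 𝔽_p-linear space of d-tensors on 𝔽_p^n, and let r_0 ≥ 0 and r ≥ 0 be such that every d-tensor T with arank(T) ≤ r_0 satisfies prank(T) ≤ r. Then E_{T ∈ U^⊥} p^{−arank(T)/2^{d-1}} ≤ p^{2·n^{d-1}·r − dim U^⊥} + p^{−r_0/2^{d-1}}, where T is uniform on U^⊥. -/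
noncomputable instance {p n d : ℕ} [NeZero p] : Fintype (Tensor p n d) :=
  Fintype.ofInjective (fun T x => T x)
    (fun _ _ h => MultilinearMap.ext fun x => congrFun h x)

namespace Stmt11Aux

variable {p n d : ℕ}

/-- The slice tensor `x ↦ x i0 i * T(x with slot i0 replaced by e_i)`. -/
noncomputable def slice (T : Tensor p n d) (i0 : Fin d) (i : Fin n) : Tensor p n d where
  toFun x := x i0 i * T (Function.update x i0 (Pi.single i 1))
  map_update_add' := by
    intro inst m j a b
    have hi : inst = instDecidableEqFin d := Subsingleton.elim _ _
    subst hi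
    rcases eq_or_ne j i0 with rfl | hj
    · simp only [Function.update_self, Function.update_idem, Pi.add_apply]
      ring
    · simp only [Function.update_of_ne (Ne.symm hj)]
      rw [Function.update_comm hj, Function.update_comm hj, Function.update_comm hj,
        MultilinearMap.map_update_add]
      ring
  map_update_smul' := by
    intro inst m j c a
    have hi : inst = instDecidableEqFin d := Subsingleton.elim _ _
    subst hi
    rcases eq_or_ne j i0 with rfl | hj
    · simp only [Function.update_self, Function.update_idem, Pi.smul_apply, smul_eq_mul]
      ring
    · simp only [Function.update_of_ne (Ne.symm hj), smul_eq_mul]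
      rw [Function.update_comm hj, Function.update_comm hj,
        MultilinearMap.map_update_smul, smul_eq_mul]
      ring

lemma slice_prankOne (hd : 2 ≤ d) (T : Tensor p n d) (i0 : Fin d) (i : Fin n) :
    PRankOne (slice T i0 i) := by
  haveI hss : Subsingleton {j // j ∈ ({i0} : Finset (Fin d))} := by
    constructor
    rintro ⟨a, ha⟩ ⟨b, hb⟩
    simp only [Finset.mem_singleton] at ha hb
    subst ha; subst hb; rfl
  refine ⟨{i0}, Finset.singleton_nonempty _, ?_, ?_⟩
  · intro hA
    have := congrArg Finset.card hA
    simp at this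
    omega
  · refine ⟨MultilinearMap.ofSubsingleton (ZMod p) (Fin n → ZMod p) (ZMod p)
        ⟨i0, Finset.mem_singleton_self i0⟩ (LinearMap.proj i),
      T.domDomRestrict (fun j => j ∉ ({i0} : Finset (Fin d))) (fun _ => Pi.single i 1), fun x => ?_⟩
    show x i0 i * T (Function.update x i0 (Pi.single i 1)) = _
    rw [MultilinearMap.domDomRestrict_apply]
    congr 1
    congr 1
    funext j
    rcases eq_or_ne j i0 with rfl | hj
    · rw [Function.update_self, dif_neg (by simp)]
    · rw [Function.update_of_ne hj, dif_pos (by simpa using hj)]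

lemma sum_slice (T : Tensor p n d) (i0 : Fin d) :
    T = ∑ i : Fin n, slice T i0 i := by
  refine MultilinearMap.ext fun x => ?_
  rw [MultilinearMap.sum_apply]
  have hx : x i0 = ∑ i : Fin n, x i0 i • (Pi.single i 1 : Fin n → ZMod p) := by
    conv_lhs => rw [← Finset.univ_sum_single (x i0)]
    refine Finset.sum_congr rfl fun i _ => ?_
    funext j
    simp [Pi.single_apply, mul_ite]
  conv_lhs => rw [← Function.update_eq_self i0 x, hx]
  rw [MultilinearMap.map_update_sum]
  refine Finset.sum_congr rfl fun i _ => ?_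
  rw [MultilinearMap.map_update_smul, smul_eq_mul]
  rfl

lemma sum_slice_decomp (hd : 2 ≤ d) (T : Tensor p n d) :
    ∃ m, ∃ f : Fin m → Tensor p n d, (∀ i, PRankOne (f i)) ∧ T = ∑ i, f i := by
  have hi0 : 0 < d := by omega
  exact ⟨n, fun i => slice T ⟨0, hi0⟩ i,
    fun i => slice_prankOne hd T ⟨0, hi0⟩ i, sum_slice T ⟨0, hi0⟩⟩

lemma prankOne_zero (hd : 2 ≤ d) : PRankOne (0 : Tensor p n d) := by
  have hi0 : 0 < d := by omega
  refine ⟨{⟨0, hi0⟩}, Finset.singleton_nonempty _, ?_, 0, 0, fun x => by simp⟩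
  intro hA
  have := congrArg Finset.card hA
  simp at this
  omega

lemma exists_witness (hd : 2 ≤ d) (T : Tensor p n d) {k : ℕ} (hk : prank T ≤ k) :
    ∃ f : Fin k → Tensor p n d, (∀ i, PRankOne (f i)) ∧ T = ∑ i, f i := by
  have hne : {r | ∃ f : Fin r → Tensor p n d, (∀ i, PRankOne (f i)) ∧ T = ∑ i, f i}.Nonempty := by
    obtain ⟨m, f, h1, h2⟩ := sum_slice_decomp hd T
    exact ⟨m, f, h1, h2⟩
  have hmem : prank T ∈ {r | ∃ f : Fin r → Tensor p n d, (∀ i, PRankOne (f i)) ∧ T = ∑ i, f i} :=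
    Nat.sInf_mem hne
  obtain ⟨g, hg1, hg2⟩ := hmem
  set F : ℕ → Tensor p n d := fun j => if h : j < prank T then g ⟨j, h⟩ else 0 with hF
  refine ⟨fun i => F i, fun i => ?_, ?_⟩
  · by_cases h : (i : ℕ) < prank T
    · simpa [hF, h] using hg1 ⟨i, h⟩
    · simpa [hF, h] using prankOne_zero hd
  · rw [hg2]
    refine Eq.trans ?_ (Fin.sum_univ_eq_sum_range F k).symm
    refine Eq.trans ?_ (Finset.sum_subset (Finset.range_subset_range.mpr hk)
      (fun x _ hx => by simp only [hF]; rw [dif_neg (by simpa using hx)]))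
    refine Eq.trans ?_ (Fin.sum_univ_eq_sum_range F (prank T))
    refine Finset.sum_congr rfl fun i _ => ?_
    simp [hF, i.isLt]

lemma exp_bound {n d a : ℕ} (hn : 1 ≤ n) (ha : 1 ≤ a) (had : a < d) :
    n ^ a + n ^ (d - a) ≤ n ^ 1 + n ^ (d - 1) := by
  obtain ⟨u', hu⟩ := Nat.exists_eq_add_of_le (Nat.one_le_iff_ne_zero.mpr (by positivity) :
    1 ≤ n ^ (a - 1))
  have h1 : n ^ a = n * n ^ (a - 1) := by
    rw [← pow_succ']
    congr 1
    omega
  have h2 : n ^ (d - 1) = n ^ (d - a) * n ^ (a - 1) := by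
    rw [← pow_add]
    congr 1
    omega
  have h3 : n ≤ n ^ (d - a) := by
    calc n = n ^ 1 := (pow_one n).symm
    _ ≤ n ^ (d - a) := Nat.pow_le_pow_right hn (by omega)
  have h4 : n * u' ≤ n ^ (d - a) * u' := Nat.mul_le_mul_right _ h3
  rw [h1, h2, hu, pow_one]
  ring_nf
  ring_nf at h4
  omega

lemma twopow_le {p n d : ℕ} (hp : 2 ≤ p) (hd : 3 ≤ d) (hnd : d ≤ n) :
    2 ^ d * p ^ (n + n ^ (d - 1)) ≤ p ^ (2 * n ^ (d - 1)) := by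
  have hn3 : 3 ≤ n := le_trans hd hnd
  have h1 : d + n ≤ n ^ (d - 1) := by
    have h2 : n ^ 2 ≤ n ^ (d - 1) := Nat.pow_le_pow_right (by omega) (by omega)
    have h3 : d + n ≤ n ^ 2 := by nlinarith
    omega
  have h4 : 2 ^ d ≤ p ^ (n ^ (d - 1) - n) :=
    calc 2 ^ d ≤ 2 ^ (n ^ (d - 1) - n) := Nat.pow_le_pow_right (by omega) (by omega)
    _ ≤ p ^ (n ^ (d - 1) - n) := Nat.pow_le_pow_left hp _
  calc 2 ^ d * p ^ (n + n ^ (d - 1)) ≤ p ^ (n ^ (d - 1) - n) * p ^ (n + n ^ (d - 1)) :=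
        Nat.mul_le_mul_right _ h4
  _ = p ^ (2 * n ^ (d - 1)) := by
      rw [← pow_add]
      congr 1
      omega

end Stmt11Aux

attribute [local instance] Classical.propDecidable

namespace Stmt11Aux

variable {p n d : ℕ}

noncomputable instance formsFintype (p n : ℕ) [NeZero p] (ι : Type) [Fintype ι] :
    Fintype (MultilinearMap (ZMod p) (fun _ : ι => (Fin n → ZMod p)) (ZMod p)) :=
  Fintype.ofInjective (fun T x => T x)
    (fun _ _ h => MultilinearMap.ext fun x => congrFun h x)

lemma card_forms_le (p n : ℕ) [NeZero p] (ι : Type) [Fintype ι] :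
    Nat.card (MultilinearMap (ZMod p) (fun _ : ι => (Fin n → ZMod p)) (ZMod p))
      ≤ p ^ (n ^ Nat.card ι) := by
  have hinj : Function.Injective
      (fun (T : MultilinearMap (ZMod p) (fun _ : ι => (Fin n → ZMod p)) (ZMod p))
        (g : ι → Fin n) => T (fun i => Pi.single (g i) (1 : ZMod p))) := by
    intro T T' hTT'
    refine Module.Basis.ext_multilinear (fun _ => Pi.basisFun (ZMod p) (Fin n)) (fun v => ?_)
    have := congrFun hTT' v
    simpa [Pi.basisFun_apply] using this
  calc Nat.card (MultilinearMap (ZMod p) (fun _ : ι => (Fin n → ZMod p)) (ZMod p))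
      ≤ Nat.card ((ι → Fin n) → ZMod p) := Nat.card_le_card_of_injective _ hinj
    _ = p ^ (n ^ Nat.card ι) := by
        rw [Nat.card_fun, Nat.card_fun, Nat.card_zmod, Nat.card_eq_fintype_card (α := Fin n),
          Fintype.card_fin]

lemma card_prankone_le [hp : Fact p.Prime] (hd : 3 ≤ d) (hnd : d ≤ n) :
    Nat.card {T : Tensor p n d // PRankOne T} ≤ p ^ (2 * n ^ (d - 1)) := by
  haveI : NeZero p := ⟨hp.out.ne_zero⟩
  have hn1 : 1 ≤ n := by omega
  have hwit : ∀ T : {T : Tensor p n d // PRankOne T},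
      ∃ s : (A : {A : Finset (Fin d) // A.Nonempty ∧ A ≠ Finset.univ}) ×
        (MultilinearMap (ZMod p) (fun _ : {i // i ∈ A.1} => (Fin n → ZMod p)) (ZMod p) ×
         MultilinearMap (ZMod p) (fun _ : {i // i ∉ A.1} => (Fin n → ZMod p)) (ZMod p)),
      ∀ x, T.1 x = s.2.1 (fun i => x i.1) * s.2.2 (fun i => x i.1) := by
    rintro ⟨T, A, hA1, hA2, T₁, T₂, hT⟩
    exact ⟨⟨⟨A, hA1, hA2⟩, (T₁, T₂)⟩, hT⟩
  choose F hF using hwit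
  have hinj : Function.Injective F := by
    intro T T' hTT'
    apply Subtype.ext
    apply MultilinearMap.ext
    intro x
    rw [hF T x, hTT', ← hF T' x]
  calc Nat.card {T : Tensor p n d // PRankOne T}
      ≤ Nat.card ((A : {A : Finset (Fin d) // A.Nonempty ∧ A ≠ Finset.univ}) ×
        (MultilinearMap (ZMod p) (fun _ : {i // i ∈ A.1} => (Fin n → ZMod p)) (ZMod p) ×
         MultilinearMap (ZMod p) (fun _ : {i // i ∉ A.1} => (Fin n → ZMod p)) (ZMod p))) :=
        Nat.card_le_card_of_injective F hinj
    _ = ∑ A : {A : Finset (Fin d) // A.Nonempty ∧ A ≠ Finset.univ},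
        Nat.card (MultilinearMap (ZMod p) (fun _ : {i // i ∈ A.1} => (Fin n → ZMod p)) (ZMod p) ×
         MultilinearMap (ZMod p) (fun _ : {i // i ∉ A.1} => (Fin n → ZMod p)) (ZMod p)) := by
        rw [Nat.card_eq_fintype_card, Fintype.card_sigma]
        exact Finset.sum_congr rfl fun A _ => (Nat.card_eq_fintype_card).symm
    _ ≤ Fintype.card {A : Finset (Fin d) // A.Nonempty ∧ A ≠ Finset.univ} *
          p ^ (n + n ^ (d - 1)) := by
        rw [← smul_eq_mul, ← Finset.card_univ]
        refine Finset.sum_le_card_nsmul _ _ _ fun A _ => ?_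
        have hA1 : 1 ≤ A.1.card := Finset.card_pos.mpr A.2.1
        have hA2 : A.1.card < d := by
          have h := Finset.card_lt_card (Finset.ssubset_univ_iff.mpr A.2.2)
          simpa using h
        have hc1 : Nat.card {i // i ∈ A.1} = A.1.card := by
          rw [Nat.card_eq_fintype_card]
          exact Fintype.card_coe A.1
        have hc2 : Nat.card {i // i ∉ A.1} = d - A.1.card := by
          rw [Nat.card_eq_fintype_card]
          rw [Fintype.card_subtype_compl]
          congr 1
          · exact Fintype.card_fin d
          · exact Fintype.card_coe A.1
        calc Nat.card (MultilinearMap (ZMod p) (fun _ : {i // i ∈ A.1} => (Fin n → ZMod p)) (ZMod p) ×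
              MultilinearMap (ZMod p) (fun _ : {i // i ∉ A.1} => (Fin n → ZMod p)) (ZMod p))
            = Nat.card (MultilinearMap (ZMod p) (fun _ : {i // i ∈ A.1} => (Fin n → ZMod p)) (ZMod p)) *
              Nat.card (MultilinearMap (ZMod p) (fun _ : {i // i ∉ A.1} => (Fin n → ZMod p)) (ZMod p)) :=
              Nat.card_prod _ _
          _ ≤ p ^ (n ^ A.1.card) * p ^ (n ^ (d - A.1.card)) := by
              have b1 := card_forms_le p n {i // i ∈ A.1}
              have b2 := card_forms_le p n {i // i ∉ A.1}
              rw [hc1] at b1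
              rw [hc2] at b2
              exact Nat.mul_le_mul b1 b2
          _ = p ^ (n ^ A.1.card + n ^ (d - A.1.card)) := (pow_add p _ _).symm
          _ ≤ p ^ (n + n ^ (d - 1)) := by
              refine Nat.pow_le_pow_right hp.out.pos ?_
              have := exp_bound hn1 hA1 hA2
              simpa using this
    _ ≤ 2 ^ d * p ^ (n + n ^ (d - 1)) := by
        refine Nat.mul_le_mul_right _ ?_
        calc Fintype.card {A : Finset (Fin d) // A.Nonempty ∧ A ≠ Finset.univ}
            ≤ Fintype.card (Finset (Fin d)) := Fintype.card_le_of_injective _ Subtype.val_injective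
          _ = 2 ^ d := by rw [Fintype.card_finset, Fintype.card_fin]
    _ ≤ p ^ (2 * n ^ (d - 1)) := twopow_le hp.out.two_le hd hnd

lemma card_prank_le [hp : Fact p.Prime] (hd : 3 ≤ d) (hnd : d ≤ n) (k : ℕ) :
    Nat.card {T : Tensor p n d // prank T ≤ k} ≤ p ^ (2 * n ^ (d - 1) * k) := by
  haveI : NeZero p := ⟨hp.out.ne_zero⟩
  have hwit : ∀ T : {T : Tensor p n d // prank T ≤ k},
      ∃ f : Fin k → Tensor p n d, (∀ i, PRankOne (f i)) ∧ T.1 = ∑ i, f i :=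
    fun T => exists_witness (by omega) T.1 T.2
  choose f hf1 hf2 using hwit
  have hinj : Function.Injective
      (fun T : {T : Tensor p n d // prank T ≤ k} =>
        (fun i => (⟨f T i, hf1 T i⟩ : {S : Tensor p n d // PRankOne S}))) := by
    intro T T' hTT'
    apply Subtype.ext
    rw [hf2 T, hf2 T']
    exact Finset.sum_congr rfl fun i _ => congrArg Subtype.val (congrFun hTT' i)
  calc Nat.card {T : Tensor p n d // prank T ≤ k}
      ≤ Nat.card (Fin k → {S : Tensor p n d // PRankOne S}) :=
        Nat.card_le_card_of_injective _ hinj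
    _ = Nat.card {S : Tensor p n d // PRankOne S} ^ k := by
        rw [Nat.card_fun, Nat.card_eq_fintype_card (α := Fin k), Fintype.card_fin]
    _ ≤ (p ^ (2 * n ^ (d - 1))) ^ k := Nat.pow_le_pow_left (card_prankone_le hd hnd) k
    _ = p ^ (2 * n ^ (d - 1) * k) := by rw [← pow_mul]

lemma abs_bias_re_le_one [NeZero p] (T : Tensor p n d) (χ : AddChar (ZMod p) ℂ) :
    |(bias T χ).re| ≤ 1 := by
  refine le_trans (Complex.abs_re_le_norm _) ?_
  have hcard : (0 : ℝ) < (Fintype.card (Fin d → (Fin n → ZMod p)) : ℝ) := by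
    exact_mod_cast Fintype.card_pos
  rw [bias, norm_div, Complex.norm_natCast, div_le_one hcard]
  calc ‖∑ x : Fin d → (Fin n → ZMod p), χ (T x)‖
      ≤ ∑ x : Fin d → (Fin n → ZMod p), ‖χ (T x)‖ := norm_sum_le _ _
    _ = ∑ x : Fin d → (Fin n → ZMod p), 1 := by
        refine Finset.sum_congr rfl fun x _ => ?_
        rw [AddChar.norm_apply]
    _ = (Fintype.card (Fin d → (Fin n → ZMod p)) : ℝ) := by
        rw [Finset.sum_const, Finset.card_univ, nsmul_eq_mul, mul_one]

lemma neg_arank_nonpos [NeZero p] (hp1 : (1:ℝ) ≤ p) (T : Tensor p n d)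
    (χ : AddChar (ZMod p) ℂ) : -(arank T χ) ≤ 0 := by
  rw [arank, neg_neg, Real.logb, ← Real.log_abs]
  exact div_nonpos_of_nonpos_of_nonneg
    (Real.log_nonpos (abs_nonneg _) (abs_bias_re_le_one T χ))
    (Real.log_nonneg hp1)

end Stmt11Aux

/-- Let `p` be prime, `n ≥ d ≥ 3`, `χ` a nontrivial additive character, and `W = U^⊥` any
`𝔽_p`-linear space of `d`-tensors on `𝔽_p^n`. If `r₀, r ≥ 0` are such that every `d`-tensor
with `arank(T) ≤ r₀` satisfies `prank(T) ≤ r`, then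
`E_{T ∈ U^⊥} p^(−arank(T)/2^(d-1)) ≤ p^(2·n^(d-1)·r − dim U^⊥) + p^(−r₀/2^(d-1))`. -/
theorem stmt11 (p n d : ℕ) [hp : Fact p.Prime] (hd : 3 ≤ d) (hnd : d ≤ n)
    (χ : AddChar (ZMod p) ℂ) (hχ : χ ≠ 1)
    (W : Submodule (ZMod p) (Tensor p n d)) (r₀ r : ℝ) (hr₀ : 0 ≤ r₀) (hr : 0 ≤ r)
    (h : ∀ T : Tensor p n d, arank T χ ≤ r₀ → (prank T : ℝ) ≤ r) :
    (∑ T : W, (p : ℝ) ^ (-(arank (T : Tensor p n d) χ) / 2 ^ (d - 1)))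
        / (Nat.card W : ℝ)
      ≤ (p : ℝ) ^ (2 * (n : ℝ) ^ (d - 1) * r - (Module.finrank (ZMod p) W : ℝ))
        + (p : ℝ) ^ (-r₀ / 2 ^ (d - 1)) := by
  haveI : NeZero p := ⟨hp.out.ne_zero⟩
  have hp1 : (1 : ℝ) < p := by exact_mod_cast hp.out.one_lt
  have hc : (0 : ℝ) < 2 ^ (d - 1) := by positivity
  set k := ⌊r⌋₊ with hk
  have hNpos : 0 < Nat.card W := Nat.card_pos
  have hN : Nat.card W = p ^ (Module.finrank (ZMod p) W) := by
    rw [Nat.card_eq_fintype_card, Module.card_eq_pow_finrank (K := ZMod p) (V := W), ZMod.card]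
  have hNR : (0 : ℝ) < (Nat.card W : ℝ) := by exact_mod_cast hNpos
  rw [div_le_iff₀ hNR]
  -- split the sum
  have hsplit := (Finset.sum_filter_add_sum_filter_not Finset.univ
    (fun T : W => arank (T : Tensor p n d) χ ≤ r₀)
    (fun T : W => (p : ℝ) ^ (-(arank (T : Tensor p n d) χ) / 2 ^ (d - 1)))).symm
  -- bound on the filtered part
  have hcf : ((Finset.univ.filter (fun T : W => arank (T : Tensor p n d) χ ≤ r₀)).card : ℕ)
      ≤ p ^ (2 * n ^ (d - 1) * k) := by
    refine le_trans ?_ (Stmt11Aux.card_prank_le hd hnd k)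
    have hinj : Function.Injective
        (fun T : {x : W // x ∈ Finset.univ.filter (fun T : W => arank (T : Tensor p n d) χ ≤ r₀)}
          => (⟨(T.1 : Tensor p n d),
                Nat.le_floor (h _ (Finset.mem_filter.mp T.2).2)⟩ :
              {T : Tensor p n d // prank T ≤ k})) := by
      intro T T' hTT'
      have h0 := congrArg (fun s : {T : Tensor p n d // prank T ≤ k} => s.1) hTT'
      apply Subtype.ext
      apply Subtype.ext
      exact h0
    calc (Finset.univ.filter (fun T : W => arank (T : Tensor p n d) χ ≤ r₀)).card
        = Nat.card {x : W // x ∈ Finset.univ.filter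
            (fun T : W => arank (T : Tensor p n d) χ ≤ r₀)} := by
          rw [Nat.card_eq_fintype_card, Fintype.card_coe]
      _ ≤ Nat.card {T : Tensor p n d // prank T ≤ k} :=
          Nat.card_le_card_of_injective _ hinj
  have hterm1 : ∀ T : W, (p : ℝ) ^ (-(arank (T : Tensor p n d) χ) / 2 ^ (d - 1)) ≤ 1 :=
    fun T => Real.rpow_le_one_of_one_le_of_nonpos hp1.le
      (div_nonpos_of_nonpos_of_nonneg (Stmt11Aux.neg_arank_nonpos hp1.le _ χ) hc.le)
  have hterm2 : ∀ T : W, ¬ (arank (T : Tensor p n d) χ ≤ r₀) →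
      (p : ℝ) ^ (-(arank (T : Tensor p n d) χ) / 2 ^ (d - 1))
        ≤ (p : ℝ) ^ (-r₀ / 2 ^ (d - 1)) := by
    intro T hT
    refine Real.rpow_le_rpow_of_exponent_le hp1.le ?_
    have h1 : -(arank (T : Tensor p n d) χ) ≤ -r₀ := neg_le_neg (le_of_not_ge hT)
    gcongr
  -- sum over the low-arank part
  have hsum1 : (∑ T ∈ Finset.univ.filter (fun T : W => arank (T : Tensor p n d) χ ≤ r₀),
      (p : ℝ) ^ (-(arank (T : Tensor p n d) χ) / 2 ^ (d - 1)))
      ≤ ((p ^ (2 * n ^ (d - 1) * k) : ℕ) : ℝ) := by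
    calc (∑ T ∈ Finset.univ.filter (fun T : W => arank (T : Tensor p n d) χ ≤ r₀),
        (p : ℝ) ^ (-(arank (T : Tensor p n d) χ) / 2 ^ (d - 1)))
        ≤ (Finset.univ.filter (fun T : W => arank (T : Tensor p n d) χ ≤ r₀)).card • (1 : ℝ) :=
          Finset.sum_le_card_nsmul _ _ _ (fun T _ => hterm1 T)
      _ = ((Finset.univ.filter (fun T : W => arank (T : Tensor p n d) χ ≤ r₀)).card : ℝ) := by
          rw [nsmul_eq_mul, mul_one]
      _ ≤ ((p ^ (2 * n ^ (d - 1) * k) : ℕ) : ℝ) := by exact_mod_cast hcf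
  -- sum over the high-arank part
  have hsum2 : (∑ T ∈ Finset.univ.filter (fun T : W => ¬ arank (T : Tensor p n d) χ ≤ r₀),
      (p : ℝ) ^ (-(arank (T : Tensor p n d) χ) / 2 ^ (d - 1)))
      ≤ (Nat.card W : ℝ) * (p : ℝ) ^ (-r₀ / 2 ^ (d - 1)) := by
    calc (∑ T ∈ Finset.univ.filter (fun T : W => ¬ arank (T : Tensor p n d) χ ≤ r₀),
        (p : ℝ) ^ (-(arank (T : Tensor p n d) χ) / 2 ^ (d - 1)))
        ≤ (Finset.univ.filter (fun T : W => ¬ arank (T : Tensor p n d) χ ≤ r₀)).card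
            • ((p : ℝ) ^ (-r₀ / 2 ^ (d - 1))) :=
          Finset.sum_le_card_nsmul _ _ _
            (fun T hT => hterm2 T (Finset.mem_filter.mp hT).2)
      _ = ((Finset.univ.filter (fun T : W => ¬ arank (T : Tensor p n d) χ ≤ r₀)).card : ℝ)
            * (p : ℝ) ^ (-r₀ / 2 ^ (d - 1)) := by rw [nsmul_eq_mul]
      _ ≤ (Nat.card W : ℝ) * (p : ℝ) ^ (-r₀ / 2 ^ (d - 1)) := by
          refine mul_le_mul_of_nonneg_right ?_ (Real.rpow_nonneg (by positivity) _)
          have hle : (Finset.univ.filter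
              (fun T : W => ¬ arank (T : Tensor p n d) χ ≤ r₀)).card ≤ Fintype.card W :=
            le_trans (Finset.card_filter_le _ _) (le_of_eq (Finset.card_univ))
          rw [Nat.card_eq_fintype_card]
          exact_mod_cast hle
  -- relate the counting bound to the rpow bound
  have hM : ((p ^ (2 * n ^ (d - 1) * k) : ℕ) : ℝ)
      ≤ (p : ℝ) ^ (2 * (n : ℝ) ^ (d - 1) * r - (Module.finrank (ZMod p) W : ℝ))
        * (Nat.card W : ℝ) := by
    have h1 : ((p ^ (2 * n ^ (d - 1) * k) : ℕ) : ℝ)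
        = (p : ℝ) ^ (((2 * n ^ (d - 1) * k : ℕ) : ℕ) : ℝ) := by
      rw [Real.rpow_natCast]
      push_cast
      ring
    have h2 : (Nat.card W : ℝ)
        = (p : ℝ) ^ ((Module.finrank (ZMod p) W : ℕ) : ℝ) := by
      rw [hN, Real.rpow_natCast]
      push_cast
      ring
    rw [h1, h2, ← Real.rpow_add (by positivity : (0:ℝ) < (p:ℝ))]
    refine Real.rpow_le_rpow_of_exponent_le hp1.le ?_
    push_cast
    have hkr : (k : ℝ) ≤ r := Nat.floor_le hr
    have : 2 * (n : ℝ) ^ (d - 1) * (k : ℝ) ≤ 2 * (n : ℝ) ^ (d - 1) * r :=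
      mul_le_mul_of_nonneg_left hkr (by positivity)
    linarith
  -- final assembly
  calc (∑ T : W, (p : ℝ) ^ (-(arank (T : Tensor p n d) χ) / 2 ^ (d - 1)))
      = (∑ T ∈ Finset.univ.filter (fun T : W => arank (T : Tensor p n d) χ ≤ r₀),
          (p : ℝ) ^ (-(arank (T : Tensor p n d) χ) / 2 ^ (d - 1)))
        + (∑ T ∈ Finset.univ.filter (fun T : W => ¬ arank (T : Tensor p n d) χ ≤ r₀),
          (p : ℝ) ^ (-(arank (T : Tensor p n d) χ) / 2 ^ (d - 1))) := hsplit
    _ ≤ ((p ^ (2 * n ^ (d - 1) * k) : ℕ) : ℝ)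
        + (Nat.card W : ℝ) * (p : ℝ) ^ (-r₀ / 2 ^ (d - 1)) := add_le_add hsum1 hsum2
    _ ≤ (p : ℝ) ^ (2 * (n : ℝ) ^ (d - 1) * r - (Module.finrank (ZMod p) W : ℝ))
          * (Nat.card W : ℝ)
        + (Nat.card W : ℝ) * (p : ℝ) ^ (-r₀ / 2 ^ (d - 1)) := add_le_add_left hM _
    _ = ((p : ℝ) ^ (2 * (n : ℝ) ^ (d - 1) * r - (Module.finrank (ZMod p) W : ℝ))
        + (p : ℝ) ^ (-r₀ / 2 ^ (d - 1))) * (Nat.card W : ℝ) := by ring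
end

section
/- Let k ≥ 3 be an integer, p ≥ k a prime, and T a nonzero symmetric (k−1)-tensor on 𝔽_p^n. Then the set {x ∈ 𝔽_p^n : T(x, x, …, x) = 0} has size at least c·p^n for a constant c > 0 depending only on p and k. -/
namespace Stmt12Aux

open MvPolynomial

/-- Exponent reduction: replace `j ≥ 1` by its representative in `[1, p-1]` mod `p-1`. -/
def ered (p j : ℕ) : ℕ := if j = 0 then 0 else (j - 1) % (p - 1) + 1

lemma ered_zero (p : ℕ) : ered p 0 = 0 := rfl

lemma ered_le (p j : ℕ) : ered p j ≤ j := by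
  unfold ered
  split
  · omega
  · have := Nat.mod_le (j - 1) (p - 1)
    omega

lemma ered_le_sub_one {p : ℕ} (hp : 2 ≤ p) (j : ℕ) : ered p j ≤ p - 1 := by
  unfold ered
  split
  · omega
  · have := Nat.mod_lt (j - 1) (show 0 < p - 1 by omega)
    omega

variable {p : ℕ} [hp : Fact p.Prime]

lemma pow_ered (x : ZMod p) (j : ℕ) : x ^ ered p j = x ^ j := by
  rcases eq_or_ne j 0 with rfl | hj
  · rfl
  have hered : ered p j = (j - 1) % (p - 1) + 1 := if_neg hj
  rcases eq_or_ne x 0 with rfl | hx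
  · rw [hered, zero_pow (by omega), zero_pow hj]
  · have h1 : x ^ (p - 1) = 1 := ZMod.pow_card_sub_one_eq_one hx
    have hmod : ∀ m : ℕ, x ^ m = x ^ (m % (p - 1)) := by
      intro m
      conv_lhs => rw [← Nat.mod_add_div m (p - 1)]
      rw [pow_add, pow_mul, h1, one_pow, mul_one]
    rw [hered, pow_succ, ← hmod (j - 1), ← pow_succ]
    congr 1
    omega

/-- Reduction of a polynomial: reduce every exponent, preserving the induced function. -/
noncomputable def red {n : ℕ} (g : MvPolynomial (Fin n) (ZMod p)) :
    MvPolynomial (Fin n) (ZMod p) :=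
  ∑ m ∈ g.support, monomial (Finsupp.mapRange (ered p) (ered_zero p) m) (coeff m g)

lemma eval_red {n : ℕ} (g : MvPolynomial (Fin n) (ZMod p)) (x : Fin n → ZMod p) :
    eval x (red g) = eval x g := by
  rw [red, map_sum, eval_eq]
  refine Finset.sum_congr rfl fun m hm => ?_
  rw [eval_monomial]
  congr 1
  rw [Finsupp.prod_mapRange_index (by intro a; rw [pow_zero])]
  · refine Finset.prod_congr rfl fun i _ => ?_
    exact pow_ered (x i) (m i)

lemma degreeOf_red_le {n : ℕ} (g : MvPolynomial (Fin n) (ZMod p)) (i : Fin n) :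
    degreeOf i (red g) ≤ p - 1 := by
  refine le_trans (degreeOf_sum_le _ _ _) (Finset.sup_le fun m _ => ?_)
  rcases eq_or_ne (coeff m g) 0 with h | h
  · simp [h]
  · rw [degreeOf_monomial_eq _ _ h, Finsupp.mapRange_apply]
    exact ered_le_sub_one hp.out.two_le _

lemma totalDegree_red_le {n : ℕ} (g : MvPolynomial (Fin n) (ZMod p)) :
    totalDegree (red g) ≤ totalDegree g := by
  refine le_trans (totalDegree_finset_sum _ _) (Finset.sup_le fun m hm => ?_)
  refine le_trans (totalDegree_monomial_le _ _) (le_trans ?_ (le_totalDegree hm))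
  rw [Finsupp.sum_mapRange_index (fun _ => rfl)]
  exact Finsupp.sum_le_sum fun i _ => ered_le p (m i)

/-- The key counting lemma (a Warning-type bound): a nonzero polynomial over `𝔽_p`
with all individual degrees `≤ p-1` and total degree `≤ D` has at least `p^(n-D)`
points where it does not vanish. -/
lemma count_lemma : ∀ (n D : ℕ) (g : MvPolynomial (Fin n) (ZMod p)), g ≠ 0 →
    (∀ i, degreeOf i g ≤ p - 1) → totalDegree g ≤ D →
    p ^ (n - D) ≤ Fintype.card {x : Fin n → ZMod p // eval x g ≠ 0} := by
  intro n
  induction n with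
  | zero =>
    intro D g hg _ _
    rw [Nat.zero_sub, pow_zero]
    have : eval (fun i : Fin 0 => (0 : ZMod p)) g ≠ 0 := by
      rw [eq_C_of_isEmpty g, eval_C]
      intro h
      apply hg
      rw [eq_C_of_isEmpty g, h, map_zero]
    have : Nonempty {x : Fin 0 → ZMod p // eval x g ≠ 0} := ⟨⟨_, this⟩⟩
    exact Fintype.card_pos
  | succ n ih =>
    intro D g hg hred hdeg
    set q : Polynomial (MvPolynomial (Fin n) (ZMod p)) := finSuccEquiv (ZMod p) n g with hq
    have hq0 : q ≠ 0 := by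
      simp only [hq, ne_eq, EmbeddingLike.map_eq_zero_iff]
      exact hg
    set e : ℕ := q.natDegree with he
    have hgE : q.coeff e ≠ 0 := Polynomial.coeff_ne_zero_of_eq_degree
      (Polynomial.degree_eq_natDegree hq0)
    have hdeg0 : e = degreeOf 0 g := by rw [he, hq, natDegree_finSuccEquiv]
    have he_le : e ≤ p - 1 := hdeg0 ▸ hred 0
    have he_le_D : e ≤ D := le_trans (hdeg0 ▸ degreeOf_le_totalDegree g 0) hdeg
    have hEdeg : totalDegree (q.coeff e) ≤ D - e := by
      have := totalDegree_coeff_finSuccEquiv_add_le g e hgE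
      rw [← hq] at this
      omega
    have hEred : ∀ i, degreeOf i (q.coeff e) ≤ p - 1 := fun i =>
      le_trans (hq ▸ degreeOf_coeff_finSuccEquiv g i e) (hred i.succ)
    have hIH := ih (D - e) (q.coeff e) hgE hEred hEdeg
    -- For every point where the leading coefficient is nonzero, the fiber polynomial in
    -- the first variable is nonzero of degree ≤ e, so has at least p - e non-roots.
    set S := {x : Fin n → ZMod p // eval x (q.coeff e) ≠ 0}
    have hfiber : ∀ x : S, p - e ≤
        Fintype.card {t : ZMod p // Polynomial.eval t (q.map (eval x.1)) ≠ 0} := by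
      intro x
      set u : Polynomial (ZMod p) := q.map (eval x.1) with hu
      have hu0 : u ≠ 0 := fun h => x.2 (by
        have := Polynomial.coeff_map (eval x.1) e (p := q)
        rw [← hu, h, Polynomial.coeff_zero] at this
        exact this.symm)
      have hudeg : u.natDegree ≤ e := Polynomial.natDegree_map_le
      have hroots : Fintype.card {t : ZMod p // Polynomial.eval t u = 0} ≤ e := by
        rw [Fintype.card_subtype]
        have hsub : Finset.filter (fun t => Polynomial.eval t u = 0) Finset.univ
            ⊆ u.roots.toFinset := by
          intro t ht
          rw [Multiset.mem_toFinset, Polynomial.mem_roots hu0]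
          simpa using (Finset.mem_filter.1 ht).2
        exact le_trans (Finset.card_le_card hsub)
          (le_trans u.roots.toFinset_card_le (le_trans (Polynomial.card_roots' u) hudeg))
      have h2 := Finset.card_filter_add_card_filter_not
        (s := (Finset.univ : Finset (ZMod p))) (p := fun t => Polynomial.eval t u = 0)
      rw [Finset.card_univ, ZMod.card p] at h2
      rw [Fintype.card_subtype] at hroots
      rw [Fintype.card_subtype]
      simp only [ne_eq]
      omega
    -- Put the fibers together.
    have hinj : Function.Injective
        (fun y : (Σ x : S, {t : ZMod p // Polynomial.eval t (q.map (eval x.1)) ≠ 0}) =>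
          (⟨Fin.cons y.2.1 y.1.1, by
            rw [eval_eq_eval_mv_eval']
            exact y.2.2⟩ : {x : Fin (n+1) → ZMod p // eval x g ≠ 0})) := by
      rintro ⟨⟨x₁, hx₁⟩, ⟨t₁, ht₁⟩⟩ ⟨⟨x₂, hx₂⟩, ⟨t₂, ht₂⟩⟩ h
      simp only [Subtype.mk_eq_mk] at h
      have h0 := congrFun h 0
      simp only [Fin.cons_zero] at h0
      have hx : x₁ = x₂ := by
        funext i
        have := congrFun h i.succ
        simpa using this
      subst hx h0
      rfl
    have hcard := Fintype.card_le_of_injective _ hinj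
    rw [Fintype.card_sigma] at hcard
    have hsum : (Fintype.card S) * (p - e) ≤
        ∑ x : S, Fintype.card {t : ZMod p // Polynomial.eval t (q.map (eval x.1)) ≠ 0} := by
      calc Fintype.card S * (p - e) = ∑ _x : S, (p - e) := by
            rw [Finset.sum_const, Finset.card_univ, smul_eq_mul]
        _ ≤ _ := Finset.sum_le_sum fun x _ => hfiber x
    have hfin : p ^ (n - (D - e)) * (p - e) ≤
        Fintype.card {x : Fin (n+1) → ZMod p // eval x g ≠ 0} :=
      le_trans (Nat.mul_le_mul_right _ hIH) (le_trans hsum hcard)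
    refine le_trans ?_ hfin
    have hp2 : 2 ≤ p := hp.out.two_le
    rcases Nat.eq_zero_or_pos e with he0 | hepos
    · have h1 : n - (D - e) = n - D := by omega
      have h2 : p - e = p := by omega
      rw [h1, h2, ← pow_succ]
      exact Nat.pow_le_pow_right (by omega) (by omega)
    · calc p ^ (n + 1 - D) ≤ p ^ (n - (D - e)) :=
            Nat.pow_le_pow_right (by omega) (by omega)
        _ ≤ p ^ (n - (D - e)) * (p - e) :=
            Nat.le_mul_of_pos_right _ (by omega)

/-- The diagonal polynomial of a multilinear form. -/
noncomputable def diagPoly {n d : ℕ} (T : Tensor p n d) : MvPolynomial (Fin n) (ZMod p) :=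
  ∑ f : Fin d → Fin n, C (T fun i => Pi.single (f i) 1) * ∏ i, X (f i)

lemma eval_diagPoly {n d : ℕ} (T : Tensor p n d) (x : Fin n → ZMod p) :
    eval x (diagPoly T) = T fun _ => x := by
  have hx1 : ∀ j : Fin n, x j • (Pi.single j (1 : ZMod p) : Fin n → ZMod p)
      = Pi.single j (x j) := fun j => by
    rw [← Pi.single_smul, smul_eq_mul, mul_one]
  have hx : (fun _ : Fin d => x)
      = fun _ : Fin d => ∑ j : Fin n, x j • (Pi.single j (1 : ZMod p) : Fin n → ZMod p) := by
    funext i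
    simp_rw [hx1]
    rw [Finset.univ_sum_single]
  conv_rhs => rw [hx]
  rw [T.map_sum, diagPoly, map_sum]
  refine Finset.sum_congr rfl fun r _ => ?_
  rw [T.map_smul_univ, eval_mul, eval_C, map_prod]
  simp only [eval_X, smul_eq_mul]
  ring

lemma totalDegree_diagPoly_le {n d : ℕ} (T : Tensor p n d) :
    (diagPoly T).totalDegree ≤ d := by
  refine le_trans (totalDegree_finset_sum _ _) (Finset.sup_le fun f _ => ?_)
  refine le_trans (totalDegree_mul _ _) ?_
  rw [totalDegree_C, zero_add]
  refine le_trans (totalDegree_finset_prod _ _) ?_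
  refine le_trans (Finset.sum_le_sum fun i _ => le_of_eq (totalDegree_X (f i))) ?_
  simp

/-- Main auxiliary result: the diagonal zero set of a `d`-tensor, `d ≥ 1`, has at least
`p ^ (n - d*(p-1))` elements. -/
lemma tensor_zero_set (n d : ℕ) (hd : 0 < d) (T : Tensor p n d) :
    p ^ (n - d * (p - 1)) ≤ Nat.card {x : Fin n → ZMod p // T (fun _ => x) = 0} := by
  classical
  have hp2 : 2 ≤ p := hp.out.two_le
  set Q := diagPoly T with hQ
  set g : MvPolynomial (Fin n) (ZMod p) := C 1 - red (Q ^ (p - 1)) with hgdef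
  have hevalg : ∀ x, eval x g = 1 - (T fun _ => x) ^ (p - 1) := by
    intro x
    rw [hgdef, map_sub, eval_C, eval_red, map_pow, hQ, eval_diagPoly]
  have hiff : ∀ x : Fin n → ZMod p, eval x g ≠ 0 ↔ (T fun _ => x) = 0 := by
    intro x
    rw [hevalg]
    constructor
    · intro h
      by_contra hT
      rw [ZMod.pow_card_sub_one_eq_one hT, sub_self] at h
      exact h rfl
    · intro h
      rw [h, zero_pow (by omega : p - 1 ≠ 0), sub_zero]
      exact one_ne_zero
  have hg0 : g ≠ 0 := by
    intro h
    have h0 := hevalg 0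
    rw [h, map_zero] at h0
    have hz : (T fun _ : Fin d => (0 : Fin n → ZMod p)) = 0 :=
      T.map_coord_zero (i := ⟨0, hd⟩) rfl
    rw [hz, zero_pow (by omega : p - 1 ≠ 0), sub_zero] at h0
    exact one_ne_zero h0.symm
  have hredg : ∀ i, degreeOf i g ≤ p - 1 := by
    intro i
    refine le_trans (degreeOf_sub_le _ _ _) (max_le ?_ (degreeOf_red_le _ i))
    rw [degreeOf_C]
    omega
  have hdeg : totalDegree g ≤ d * (p - 1) := by
    refine le_trans (totalDegree_sub _ _) (max_le ?_ ?_)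
    · rw [show (C 1 : MvPolynomial (Fin n) (ZMod p)) = C (1 : ZMod p) from rfl, totalDegree_C]
      exact Nat.zero_le _
    · refine le_trans (totalDegree_red_le _) (le_trans (totalDegree_pow _ _) ?_)
      calc (p - 1) * Q.totalDegree ≤ (p - 1) * d :=
            Nat.mul_le_mul_left _ (totalDegree_diagPoly_le T)
        _ = d * (p - 1) := Nat.mul_comm _ _
  have hcount := count_lemma n (d * (p - 1)) g hg0 hredg hdeg
  rw [Nat.card_eq_fintype_card]
  exact le_trans hcount
    (le_of_eq (Fintype.card_congr (Equiv.subtypeEquivRight fun x => hiff x)))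

end Stmt12Aux

/-- Let `k ≥ 3` be an integer and `p ≥ k` a prime. For every `n` and every nonzero symmetric
`(k−1)`-tensor `T` on `𝔽_p^n`, the set `{x ∈ 𝔽_p^n : T(x,…,x) = 0}` has size at least
`c·p^n` for a constant `c > 0` depending only on `p` and `k`. -/
theorem stmt12 (k p : ℕ) (hk : 3 ≤ k) [hp : Fact p.Prime] (hkp : k ≤ p) :
    ∃ c : ℝ, 0 < c ∧
      ∀ (n : ℕ) (T : Tensor p n (k - 1)), T ≠ 0 →
        (∀ (σ : Equiv.Perm (Fin (k - 1))) (v : Fin (k - 1) → (Fin n → ZMod p)),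
          T (v ∘ σ) = T v) →
        c * (p : ℝ) ^ n ≤ (Nat.card {x : Fin n → ZMod p // T (fun _ => x) = 0} : ℝ) := by
  have hp2 : 2 ≤ p := hp.out.two_le
  have hpR : (0 : ℝ) < (p : ℝ) := by exact_mod_cast (by omega : 0 < p)
  have hpR1 : (1 : ℝ) ≤ (p : ℝ) := by exact_mod_cast (by omega : 1 ≤ p)
  refine ⟨((p : ℝ) ^ ((k - 1) * (p - 1)))⁻¹, inv_pos.2 (pow_pos hpR _), ?_⟩
  intro n T _ _
  have hb := Stmt12Aux.tensor_zero_set (p := p) n (k - 1) (by omega) T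
  have hb' : (p : ℝ) ^ (n - (k - 1) * (p - 1)) ≤
      (Nat.card {x : Fin n → ZMod p // T (fun _ => x) = 0} : ℝ) := by
    exact_mod_cast hb
  refine le_trans ?_ hb'
  rw [inv_mul_le_iff₀ (pow_pos hpR _), ← pow_add]
  exact pow_le_pow_right₀ hpR1 (by omega)
end
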